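/- arXiv:1305.0669 — 6 statements merged into one kernel-verified Lean document; each statement's English description precedes it below -/
import Mathlib

section
/- For the path access graph on N ≥ k+1 vertices, the sequence I_n = ⟨1,2,…,k,k+1,k,…,2⟩^n satisfies LRU(I_n) = 2n + k − 1 and FWF(I_n) = 2kn, hence lim_{n→∞} (FWF(I_n) − LRU(I_n))/|I_n| = (k−1)/k. -/
/-- One step of LRU with cache size `k`: cache is a list of pages, most
recently used first; returns the new cache and whether the request faulted. -/
def lruStep (k : ℕ) (c : List ℕ) (p : ℕ) : List ℕ × Bool :=
  if p ∈ c then (p :: c.erase p, false) else ((p :: c).take k, true)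

/-- One step of FIFO with cache size `k`: cache is a list of pages, most
recently entered first. -/
def fifoStep (k : ℕ) (c : List ℕ) (p : ℕ) : List ℕ × Bool :=
  if p ∈ c then (c, false) else ((p :: c).take k, true)

/-- One step of FWF (flush-when-full) with cache size `k`. -/
def fwfStep (k : ℕ) (c : List ℕ) (p : ℕ) : List ℕ × Bool :=
  if p ∈ c then (c, false)
  else if c.length = k then ([p], true) else (p :: c, true)

/-- Number of faults incurred by an algorithm given by `step`, starting from
an empty cache, on the request sequence `I`. -/
def runCost (step : List ℕ → ℕ → List ℕ × Bool) (I : List ℕ) : ℕ :=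
  (I.foldl (fun s p => ((step s.1 p).1, s.2 + if (step s.1 p).2 then 1 else 0))
    (([] : List ℕ), 0)).2

/-- Number of faults of LRU with cache size `k` on sequence `I`. -/
def lruCost (k : ℕ) (I : List ℕ) : ℕ := runCost (lruStep k) I

/-- Number of faults of FIFO with cache size `k` on sequence `I`. -/
def fifoCost (k : ℕ) (I : List ℕ) : ℕ := runCost (fifoStep k) I

/-- Number of faults of FWF with cache size `k` on sequence `I`. -/
def fwfCost (k : ℕ) (I : List ℕ) : ℕ := runCost (fwfStep k) I

/-- `n`-fold concatenation of the list `l`. -/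
def repeatList (l : List ℕ) (n : ℕ) : List ℕ := (List.replicate n l).flatten

/-- The block `⟨1, 2, …, k, k+1, k, …, 2⟩` of length `2k` on the path graph. -/
def pathBlock (k : ℕ) : List ℕ := List.range' 1 (k + 1) ++ (List.range' 2 (k - 1)).reverse

/-- `I_n = ⟨1, 2, …, k, k+1, k, …, 2⟩^n`. -/
def pathSeq (k n : ℕ) : List ℕ := repeatList (pathBlock k) n

/-! ### Auxiliary machinery -/

def runState (step : List ℕ → ℕ → List ℕ × Bool) (c : List ℕ) (I : List ℕ) : List ℕ :=
  I.foldl (fun c p => (step c p).1) c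

def costFrom (step : List ℕ → ℕ → List ℕ × Bool) (c : List ℕ) (I : List ℕ) : ℕ :=
  (I.foldl (fun s p => ((step s.1 p).1, s.2 + if (step s.1 p).2 then 1 else 0)) (c, 0)).2

lemma foldl_spec (step : List ℕ → ℕ → List ℕ × Bool) (I : List ℕ) : ∀ (c : List ℕ) (m : ℕ),
    I.foldl (fun s p => ((step s.1 p).1, s.2 + if (step s.1 p).2 then 1 else 0)) (c, m)
      = (runState step c I, m + costFrom step c I) := by
  induction I with
  | nil => intro c m; simp [runState, costFrom]
  | cons p I ih =>
    intro c m
    simp only [List.foldl_cons, runState, costFrom]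
    rw [ih, ih]
    simp only [Prod.mk.injEq, List.foldl_cons]
    refine ⟨rfl, by omega⟩

lemma runState_nil (step : List ℕ → ℕ → List ℕ × Bool) (c : List ℕ) :
    runState step c [] = c := rfl

lemma costFrom_nil (step : List ℕ → ℕ → List ℕ × Bool) (c : List ℕ) :
    costFrom step c [] = 0 := rfl

lemma runState_cons (step : List ℕ → ℕ → List ℕ × Bool) (c : List ℕ) (p : ℕ) (I : List ℕ) :
    runState step c (p :: I) = runState step (step c p).1 I := rfl

lemma costFrom_cons (step : List ℕ → ℕ → List ℕ × Bool) (c : List ℕ) (p : ℕ) (I : List ℕ) :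
    costFrom step c (p :: I)
      = (if (step c p).2 then 1 else 0) + costFrom step (step c p).1 I := by
  show (List.foldl (fun s p => ((step s.1 p).1, s.2 + if (step s.1 p).2 then 1 else 0))
    ((c : List ℕ), (0:ℕ)) (p :: I)).2 = _
  rw [List.foldl_cons, foldl_spec]
  simp

lemma runState_append (step : List ℕ → ℕ → List ℕ × Bool) (c : List ℕ) (I₁ I₂ : List ℕ) :
    runState step c (I₁ ++ I₂) = runState step (runState step c I₁) I₂ := by
  simp [runState, List.foldl_append]

lemma costFrom_append (step : List ℕ → ℕ → List ℕ × Bool) (c : List ℕ) (I₁ I₂ : List ℕ) :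
    costFrom step c (I₁ ++ I₂)
      = costFrom step c I₁ + costFrom step (runState step c I₁) I₂ := by
  show (List.foldl (fun s p => ((step s.1 p).1, s.2 + if (step s.1 p).2 then 1 else 0))
    ((c : List ℕ), (0:ℕ)) (I₁ ++ I₂)).2 = _
  rw [List.foldl_append, foldl_spec, foldl_spec]
  simp

lemma runCost_eq (step : List ℕ → ℕ → List ℕ × Bool) (I : List ℕ) :
    runCost step I = costFrom step [] I := rfl

lemma rev_succ (s m : ℕ) :
    (List.range' s (m+1)).reverse = (s+m) :: (List.range' s m).reverse := by
  rw [List.range'_concat]; simp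

lemma rev1_succ (a : ℕ) :
    (List.range' 1 (a+1)).reverse = (a+1) :: (List.range' 1 a).reverse := by
  rw [rev_succ, Nat.add_comm]

lemma rev2_succ (a : ℕ) :
    (List.range' 2 (a+1)).reverse = (a+2) :: (List.range' 2 a).reverse := by
  rw [rev_succ, Nat.add_comm]

/-! ### LRU phase lemmas -/

/-- Ascending run of hits for LRU. -/
lemma lru_asc (k : ℕ) : ∀ (m a t : ℕ),
    runState (lruStep k) ((List.range' 1 a).reverse ++ List.range' (a+1) (m+t))
        (List.range' (a+1) m)
      = (List.range' 1 (a+m)).reverse ++ List.range' (a+1+m) t ∧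
    costFrom (lruStep k) ((List.range' 1 a).reverse ++ List.range' (a+1) (m+t))
        (List.range' (a+1) m) = 0 := by
  intro m
  induction m with
  | zero => intro a t; simp [runState_nil, costFrom_nil]
  | succ m ih =>
    intro a t
    have hc : List.range' (a+1) (m+1+t) = (a+1) :: List.range' (a+2) (m+t) := by
      rw [show m+1+t = (m+t)+1 by ring, List.range'_succ]
    have hmem : (a+1) ∈ (List.range' 1 a).reverse ++ List.range' (a+1) (m+1+t) := by
      rw [hc]; simp
    have hnot : (a+1) ∉ (List.range' 1 a).reverse := by
      simp only [List.mem_reverse, List.mem_range'_1]; omega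
    have hstep : lruStep k ((List.range' 1 a).reverse ++ List.range' (a+1) (m+1+t)) (a+1)
        = ((List.range' 1 (a+1)).reverse ++ List.range' (a+2) (m+t), false) := by
      rw [lruStep, if_pos hmem]
      simp only [Prod.mk.injEq, and_true]
      rw [hc, List.erase_append_right _ hnot, List.erase_cons_head, rev1_succ]
      rfl
    rw [List.range'_succ, runState_cons, costFrom_cons, hstep]
    simp only [Bool.false_eq_true, if_false, zero_add]
    have h := ih (a+1) t
    rw [show (a+1)+m = a+(m+1) by omega, show (a+1)+1+m = a+1+(m+1) by omega] at h
    exact h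

/-- Descending run of hits for LRU. -/
lemma lru_desc (k : ℕ) : ∀ (m t : ℕ),
    runState (lruStep k) (List.range' (m+2) t ++ (List.range' 2 m).reverse)
        ((List.range' 2 m).reverse)
      = List.range' 2 (t+m) ∧
    costFrom (lruStep k) (List.range' (m+2) t ++ (List.range' 2 m).reverse)
        ((List.range' 2 m).reverse) = 0 := by
  intro m
  induction m with
  | zero => intro t; simp [runState_nil, costFrom_nil]
  | succ m ih =>
    intro t
    have hnot : (m+2) ∉ List.range' (m+1+2) t := by
      simp only [List.mem_range'_1]; omega
    have hmem : (m+2) ∈ List.range' (m+1+2) t ++ ((m+2) :: (List.range' 2 m).reverse) := by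
      simp
    have hstep : lruStep k (List.range' (m+1+2) t ++ ((m+2) :: (List.range' 2 m).reverse)) (m+2)
        = (List.range' (m+2) (t+1) ++ (List.range' 2 m).reverse, false) := by
      rw [lruStep, if_pos hmem]
      simp only [Prod.mk.injEq, and_true]
      rw [List.erase_append_right _ hnot, List.erase_cons_head, List.range'_succ]
      rfl
    rw [rev2_succ, runState_cons, costFrom_cons, hstep]
    simp only [Bool.false_eq_true, if_false, zero_add]
    have h := ih (t+1)
    rw [show (t+1)+m = t+(m+1) by omega] at h
    exact h

/-- Ascending run of faults filling the LRU cache. -/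
lemma lru_fill (k : ℕ) : ∀ (m a : ℕ), a + m ≤ k →
    runState (lruStep k) ((List.range' 1 a).reverse) (List.range' (a+1) m)
      = (List.range' 1 (a+m)).reverse ∧
    costFrom (lruStep k) ((List.range' 1 a).reverse) (List.range' (a+1) m) = m := by
  intro m
  induction m with
  | zero => intro a _; simp [runState_nil, costFrom_nil]
  | succ m ih =>
    intro a ha
    have hnot : (a+1) ∉ (List.range' 1 a).reverse := by
      simp only [List.mem_reverse, List.mem_range'_1]; omega
    have hstep : lruStep k ((List.range' 1 a).reverse) (a+1)
        = ((List.range' 1 (a+1)).reverse, true) := by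
      rw [lruStep, if_neg hnot]
      simp only [Prod.mk.injEq, and_true]
      rw [List.take_of_length_le (by simp; omega), rev1_succ]
    rw [List.range'_succ, runState_cons, costFrom_cons, hstep]
    simp only [if_true]
    have h := ih (a+1) (by omega)
    rw [show (a+1)+m = a+(m+1) by omega] at h
    exact ⟨h.1, by omega⟩

/-! ### FWF phase lemmas -/

/-- Ascending run of faults filling the FWF cache. -/
lemma fwf_asc (k : ℕ) : ∀ (m a : ℕ), a + m ≤ k →
    runState (fwfStep k) ((List.range' 1 a).reverse) (List.range' (a+1) m)
      = (List.range' 1 (a+m)).reverse ∧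
    costFrom (fwfStep k) ((List.range' 1 a).reverse) (List.range' (a+1) m) = m := by
  intro m
  induction m with
  | zero => intro a _; simp [runState_nil, costFrom_nil]
  | succ m ih =>
    intro a ha
    have hnot : (a+1) ∉ (List.range' 1 a).reverse := by
      simp only [List.mem_reverse, List.mem_range'_1]; omega
    have hstep : fwfStep k ((List.range' 1 a).reverse) (a+1)
        = ((List.range' 1 (a+1)).reverse, true) := by
      rw [fwfStep, if_neg hnot, if_neg (by simp; omega)]
      simp only [Prod.mk.injEq, and_true]
      rw [rev1_succ]
    rw [List.range'_succ, runState_cons, costFrom_cons, hstep]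
    simp only [if_true]
    have h := ih (a+1) (by omega)
    rw [show (a+1)+m = a+(m+1) by omega] at h
    exact ⟨h.1, by omega⟩

/-- Descending run of faults filling the FWF cache. -/
lemma fwf_desc (k : ℕ) : ∀ (m t a : ℕ), t + m ≤ k →
    runState (fwfStep k) (List.range' (a+m) t) ((List.range' a m).reverse)
      = List.range' a (t+m) ∧
    costFrom (fwfStep k) (List.range' (a+m) t) ((List.range' a m).reverse) = m := by
  intro m
  induction m with
  | zero => intro t a _; simp [runState_nil, costFrom_nil]
  | succ m ih =>
    intro t a ht
    have hnot : (a+m) ∉ List.range' (a+(m+1)) t := by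
      simp only [List.mem_range'_1]; omega
    have hstep : fwfStep k (List.range' (a+(m+1)) t) (a+m)
        = (List.range' (a+m) (t+1), true) := by
      rw [fwfStep, if_neg hnot, if_neg (by simp; omega)]
      simp only [Prod.mk.injEq, and_true]
      rw [List.range'_succ]
      rfl
    rw [rev_succ, runState_cons, costFrom_cons, hstep]
    simp only [if_true]
    have h := ih (t+1) a (by omega)
    rw [show (t+1)+m = t+(m+1) by omega] at h
    exact ⟨h.1, by omega⟩

/-! ### Sequencing combinators -/

lemma run_seq (step : List ℕ → ℕ → List ℕ × Bool) {c c₁ c₂ : List ℕ} {I₁ I₂ : List ℕ}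
    {n₁ n₂ : ℕ}
    (h₁ : runState step c I₁ = c₁ ∧ costFrom step c I₁ = n₁)
    (h₂ : runState step c₁ I₂ = c₂ ∧ costFrom step c₁ I₂ = n₂) :
    runState step c (I₁ ++ I₂) = c₂ ∧ costFrom step c (I₁ ++ I₂) = n₁ + n₂ := by
  rw [runState_append, costFrom_append, h₁.1, h₁.2, h₂.1, h₂.2]
  exact ⟨rfl, rfl⟩

lemma run_single (step : List ℕ → ℕ → List ℕ × Bool) {c c' : List ℕ} {p : ℕ} {b : Bool}
    (h : step c p = (c', b)) :
    runState step c [p] = c' ∧ costFrom step c [p] = if b then 1 else 0 := by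
  simp [runState, costFrom, h]

/-! ### Block lemmas -/

lemma range1_eq (k : ℕ) (hk : 2 ≤ k) :
    List.range' 1 k = 1 :: List.range' 2 (k-1) := by
  rw [show k = (k-1)+1 by omega, List.range'_succ, show (k-1)+1-1 = k-1 by omega]

lemma block_decomp (k : ℕ) (hk : 2 ≤ k) :
    pathBlock k = List.range' 1 k ++ ([k+1] ++ (List.range' 2 (k-1)).reverse) := by
  rw [pathBlock, List.range'_concat (s := 1) (n := k), show 1+1*k = k+1 by omega, List.append_assoc]

lemma block_decomp' (k : ℕ) (hk : 2 ≤ k) :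
    pathBlock k = [1] ++ (List.range' 2 (k-1) ++ ([k+1] ++ (List.range' 2 (k-1)).reverse)) := by
  rw [block_decomp k hk, range1_eq k hk]
  simp

lemma range2_eq (k : ℕ) (hk : 2 ≤ k) :
    List.range' 2 k = List.range' 2 (k-1) ++ [k+1] := by
  rw [show k = (k-1)+1 by omega, List.range'_concat]
  congr 2
  omega

lemma rev1_eq (k : ℕ) (hk : 2 ≤ k) :
    (List.range' 1 k).reverse = (List.range' 2 (k-1)).reverse ++ [1] := by
  rw [range1_eq k hk]
  simp

/-- LRU, phase: the single request `1` from the steady state. -/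
lemma lru_p1 (k : ℕ) (hk : 2 ≤ k) :
    runState (lruStep k) (List.range' 2 k) [1] = List.range' 1 k ∧
    costFrom (lruStep k) (List.range' 2 k) [1] = 1 := by
  have h1not : (1:ℕ) ∉ List.range' 2 k := by simp [List.mem_range'_1]
  have hstep : lruStep k (List.range' 2 k) 1 = (List.range' 1 k, true) := by
    rw [lruStep, if_neg h1not]
    simp only [Prod.mk.injEq, and_true]
    rw [range2_eq k hk, show (1:ℕ) :: (List.range' 2 (k-1) ++ [k+1])
        = (1 :: List.range' 2 (k-1)) ++ [k+1] from rfl,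
      List.take_left' (by simp; omega), ← range1_eq k hk]
  simpa using run_single (lruStep k) hstep

/-- LRU, phase: ascending hits `2,…,k`. -/
lemma lru_p2 (k : ℕ) (hk : 2 ≤ k) :
    runState (lruStep k) (List.range' 1 k) (List.range' 2 (k-1))
      = (List.range' 1 k).reverse ∧
    costFrom (lruStep k) (List.range' 1 k) (List.range' 2 (k-1)) = 0 := by
  have h := lru_asc k (k-1) 1 0
  simp only [Nat.add_zero] at h
  have hc : (List.range' 1 1).reverse ++ List.range' (1+1) (k-1) = List.range' 1 k := by
    rw [range1_eq k hk]; rfl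
  rw [hc] at h
  rw [show 1+(k-1) = k by omega] at h
  simpa using h

/-- LRU, phase: the single request `k+1`. -/
lemma lru_p3 (k : ℕ) (hk : 2 ≤ k) :
    runState (lruStep k) ((List.range' 1 k).reverse) [k+1]
      = List.range' ((k-1)+2) 1 ++ (List.range' 2 (k-1)).reverse ∧
    costFrom (lruStep k) ((List.range' 1 k).reverse) [k+1] = 1 := by
  have hnot : (k+1) ∉ (List.range' 1 k).reverse := by
    simp only [List.mem_reverse, List.mem_range'_1]; omega
  have hstep : lruStep k ((List.range' 1 k).reverse) (k+1)
      = (List.range' ((k-1)+2) 1 ++ (List.range' 2 (k-1)).reverse, true) := by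
    rw [lruStep, if_neg hnot]
    simp only [Prod.mk.injEq, and_true]
    rw [rev1_eq k hk, show (k+1) :: ((List.range' 2 (k-1)).reverse ++ [1])
        = ((k+1) :: (List.range' 2 (k-1)).reverse) ++ [1] from rfl,
      List.take_left' (by simp; omega)]
    have h1 : List.range' ((k-1)+2) 1 = [k+1] := by
      rw [show (k-1)+2 = k+1 by omega, List.range'_one]
    rw [h1]
    rfl
  simpa using run_single (lruStep k) hstep

/-- LRU, phase: descending hits `k,…,2`. -/
lemma lru_p4 (k : ℕ) (hk : 2 ≤ k) :
    runState (lruStep k) (List.range' ((k-1)+2) 1 ++ (List.range' 2 (k-1)).reverse)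
      ((List.range' 2 (k-1)).reverse) = List.range' 2 k ∧
    costFrom (lruStep k) (List.range' ((k-1)+2) 1 ++ (List.range' 2 (k-1)).reverse)
      ((List.range' 2 (k-1)).reverse) = 0 := by
  have h := lru_desc k (k-1) 1
  rw [show 1+(k-1) = k by omega] at h
  exact h

/-- LRU on one block from the steady state costs `2`. -/
lemma lru_block_steady (k : ℕ) (hk : 2 ≤ k) :
    runState (lruStep k) (List.range' 2 k) (pathBlock k) = List.range' 2 k ∧
    costFrom (lruStep k) (List.range' 2 k) (pathBlock k) = 2 := by
  rw [block_decomp' k hk]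
  have h := run_seq (lruStep k) (lru_p1 k hk)
    (run_seq (lruStep k) (lru_p2 k hk) (run_seq (lruStep k) (lru_p3 k hk) (lru_p4 k hk)))
  exact ⟨h.1, h.2⟩

/-- LRU on the first block from the empty cache costs `k+1`. -/
lemma lru_block_first (k : ℕ) (hk : 2 ≤ k) :
    runState (lruStep k) [] (pathBlock k) = List.range' 2 k ∧
    costFrom (lruStep k) [] (pathBlock k) = k + 1 := by
  rw [block_decomp k hk]
  have hfill := lru_fill k k 0 (by omega)
  simp only [Nat.zero_add] at hfill
  have hfill' : runState (lruStep k) [] (List.range' 1 k) = (List.range' 1 k).reverse ∧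
      costFrom (lruStep k) [] (List.range' 1 k) = k := by
    have he : ((List.range' 1 0).reverse : List ℕ) = [] := rfl
    rw [← he]
    exact hfill
  have h := run_seq (lruStep k) hfill'
    (run_seq (lruStep k) (lru_p3 k hk) (lru_p4 k hk))
  exact ⟨h.1, by rw [h.2]⟩

/-- FWF, phase: the single request `1` from the steady state (flush). -/
lemma fwf_p1 (k : ℕ) (hk : 2 ≤ k) :
    runState (fwfStep k) (List.range' 2 k) [1] = (List.range' 1 1).reverse ∧
    costFrom (fwfStep k) (List.range' 2 k) [1] = 1 := by
  have h1not : (1:ℕ) ∉ List.range' 2 k := by simp [List.mem_range'_1]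
  have hstep : fwfStep k (List.range' 2 k) 1 = ((List.range' 1 1).reverse, true) := by
    rw [fwfStep, if_neg h1not, if_pos (by simp)]
    simp [List.range'_one]
  simpa using run_single (fwfStep k) hstep

/-- FWF, phase: ascending faults `2,…,k`. -/
lemma fwf_p2 (k : ℕ) (hk : 2 ≤ k) :
    runState (fwfStep k) ((List.range' 1 1).reverse) (List.range' 2 (k-1))
      = (List.range' 1 k).reverse ∧
    costFrom (fwfStep k) ((List.range' 1 1).reverse) (List.range' 2 (k-1)) = k - 1 := by
  have h := fwf_asc k (k-1) 1 (by omega)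
  rw [show 1+(k-1) = k by omega] at h
  exact h

/-- FWF, phase: the single request `k+1` (flush). -/
lemma fwf_p3 (k : ℕ) (hk : 2 ≤ k) :
    runState (fwfStep k) ((List.range' 1 k).reverse) [k+1] = List.range' (2+(k-1)) 1 ∧
    costFrom (fwfStep k) ((List.range' 1 k).reverse) [k+1] = 1 := by
  have hnot : (k+1) ∉ (List.range' 1 k).reverse := by
    simp only [List.mem_reverse, List.mem_range'_1]; omega
  have hstep : fwfStep k ((List.range' 1 k).reverse) (k+1)
      = (List.range' (2+(k-1)) 1, true) := by
    rw [fwfStep, if_neg hnot, if_pos (by simp)]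
    rw [show 2+(k-1) = k+1 by omega]
    simp [List.range'_one]
  simpa using run_single (fwfStep k) hstep

/-- FWF, phase: descending faults `k,…,2`. -/
lemma fwf_p4 (k : ℕ) (hk : 2 ≤ k) :
    runState (fwfStep k) (List.range' (2+(k-1)) 1) ((List.range' 2 (k-1)).reverse)
      = List.range' 2 k ∧
    costFrom (fwfStep k) (List.range' (2+(k-1)) 1) ((List.range' 2 (k-1)).reverse)
      = k - 1 := by
  have h := fwf_desc k (k-1) 1 2 (by omega)
  rw [show 1+(k-1) = k by omega] at h
  exact h

/-- FWF on one block from the steady state costs `2k`. -/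
lemma fwf_block_steady (k : ℕ) (hk : 2 ≤ k) :
    runState (fwfStep k) (List.range' 2 k) (pathBlock k) = List.range' 2 k ∧
    costFrom (fwfStep k) (List.range' 2 k) (pathBlock k) = 2 * k := by
  rw [block_decomp' k hk]
  have h := run_seq (fwfStep k) (fwf_p1 k hk)
    (run_seq (fwfStep k) (fwf_p2 k hk) (run_seq (fwfStep k) (fwf_p3 k hk) (fwf_p4 k hk)))
  exact ⟨h.1, by rw [h.2]; omega⟩

/-- FWF on the first block from the empty cache costs `2k`. -/
lemma fwf_block_first (k : ℕ) (hk : 2 ≤ k) :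
    runState (fwfStep k) [] (pathBlock k) = List.range' 2 k ∧
    costFrom (fwfStep k) [] (pathBlock k) = 2 * k := by
  rw [block_decomp k hk]
  have hfill := fwf_asc k k 0 (by omega)
  simp only [Nat.zero_add] at hfill
  have hfill' : runState (fwfStep k) [] (List.range' 1 k) = (List.range' 1 k).reverse ∧
      costFrom (fwfStep k) [] (List.range' 1 k) = k := by
    have he : ((List.range' 1 0).reverse : List ℕ) = [] := rfl
    rw [← he]
    exact hfill
  have h := run_seq (fwfStep k) hfill'
    (run_seq (fwfStep k) (fwf_p3 k hk) (fwf_p4 k hk))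
  exact ⟨h.1, by rw [h.2]; omega⟩

/-! ### Sequence lemmas -/

lemma pathSeq_zero (k : ℕ) : pathSeq k 0 = [] := rfl

lemma pathSeq_succ (k n : ℕ) : pathSeq k (n+1) = pathBlock k ++ pathSeq k n := by
  simp [pathSeq, repeatList, List.replicate_succ]

lemma lru_seq (k : ℕ) (hk : 2 ≤ k) : ∀ n : ℕ,
    runState (lruStep k) (List.range' 2 k) (pathSeq k n) = List.range' 2 k ∧
    costFrom (lruStep k) (List.range' 2 k) (pathSeq k n) = 2 * n := by
  intro n
  induction n with
  | zero => simp [pathSeq_zero, runState_nil, costFrom_nil]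
  | succ n ih =>
    rw [pathSeq_succ]
    have h := run_seq (lruStep k) (lru_block_steady k hk) ih
    exact ⟨h.1, by rw [h.2]; omega⟩

lemma fwf_seq (k : ℕ) (hk : 2 ≤ k) : ∀ n : ℕ,
    runState (fwfStep k) (List.range' 2 k) (pathSeq k n) = List.range' 2 k ∧
    costFrom (fwfStep k) (List.range' 2 k) (pathSeq k n) = 2 * k * n := by
  intro n
  induction n with
  | zero => simp [pathSeq_zero, runState_nil, costFrom_nil]
  | succ n ih =>
    rw [pathSeq_succ]
    have h := run_seq (fwfStep k) (fwf_block_steady k hk) ih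
    exact ⟨h.1, by rw [h.2]; ring⟩

lemma lru_total (k : ℕ) (hk : 2 ≤ k) (n : ℕ) (hn : 1 ≤ n) :
    lruCost k (pathSeq k n) = 2 * n + k - 1 := by
  obtain ⟨m, rfl⟩ : ∃ m, n = m + 1 := ⟨n - 1, by omega⟩
  rw [lruCost, runCost_eq, pathSeq_succ]
  have h := run_seq (lruStep k) (lru_block_first k hk) ((lru_seq k hk) m)
  rw [h.2]
  omega

lemma fwf_total (k : ℕ) (hk : 2 ≤ k) (n : ℕ) (hn : 1 ≤ n) :
    fwfCost k (pathSeq k n) = 2 * k * n := by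
  obtain ⟨m, rfl⟩ : ∃ m, n = m + 1 := ⟨n - 1, by omega⟩
  rw [fwfCost, runCost_eq, pathSeq_succ]
  have h := run_seq (fwfStep k) (fwf_block_first k hk) ((fwf_seq k hk) m)
  rw [h.2]
  ring

lemma pathBlock_length (k : ℕ) (hk : 2 ≤ k) : (pathBlock k).length = 2 * k := by
  simp [pathBlock]
  omega

lemma pathSeq_length (k : ℕ) (hk : 2 ≤ k) (n : ℕ) :
    (pathSeq k n).length = 2 * k * n := by
  induction n with
  | zero => simp [pathSeq_zero]
  | succ n ih =>
    rw [pathSeq_succ, List.length_append, ih, pathBlock_length k hk]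
    ring

open Filter in
/-- On the path access graph with `N ≥ k+1` vertices, the sequence
`I_n = ⟨1,…,k,k+1,k,…,2⟩^n` satisfies `LRU(I_n) = 2n + k − 1` and
`FWF(I_n) = 2kn`, hence `(FWF(I_n) − LRU(I_n))/|I_n| → (k−1)/k`. -/
theorem stmt4 (k N : ℕ) (hk : 2 ≤ k) (hN : k + 1 ≤ N) :
    (∀ n, 1 ≤ n →
      lruCost k (pathSeq k n) = 2 * n + k - 1 ∧ fwfCost k (pathSeq k n) = 2 * k * n) ∧
    Tendsto
      (fun n : ℕ =>
        ((fwfCost k (pathSeq k n) : ℝ) - (lruCost k (pathSeq k n) : ℝ)) /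
          ((pathSeq k n).length : ℝ))
      atTop (nhds (((k : ℝ) - 1) / k)) := by
  refine ⟨fun n hn => ⟨lru_total k hk n hn, fwf_total k hk n hn⟩, ?_⟩
  have hk0 : (k : ℝ) ≠ 0 := Nat.cast_ne_zero.mpr (by omega)
  have htend : Tendsto (fun n : ℕ => ((k:ℝ)-1)/k - (((k:ℝ)-1)/(2*k)) * (1/(n:ℝ)))
      atTop (nhds (((k:ℝ)-1)/k)) := by
    have h1 := tendsto_one_div_atTop_nhds_zero_nat.const_mul (((k:ℝ)-1)/(2*k))
    have h2 := (tendsto_const_nhds (x := ((k:ℝ)-1)/k) (f := atTop)).sub h1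
    simpa using h2
  refine Tendsto.congr' ?_ htend
  filter_upwards [eventually_ge_atTop 1] with n hn
  rw [lru_total k hk n hn, fwf_total k hk n hn, pathSeq_length k hk n]
  have hn0 : (n:ℝ) ≠ 0 := Nat.cast_ne_zero.mpr (by omega)
  have hcast : ((2*n+k-1 : ℕ) : ℝ) = 2*(n:ℝ)+(k:ℝ)-1 := by
    push_cast [Nat.cast_sub (by omega : 1 ≤ 2*n+k)]
    ring
  rw [hcast]
  push_cast
  field_simp
  ring
end

section
/- On the sequence I_n = ⟨1,2,…,k,k+1,k,…,2⟩^n, FWF faults on every request, i.e., FWF(I_n) = 2kn. -/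
namespace FWFAux

/-- The fold function used by `runCost` with step `fwfStep k`. -/
def F (k : ℕ) (s : List ℕ × ℕ) (p : ℕ) : List ℕ × ℕ :=
  ((fwfStep k s.1 p).1, s.2 + if (fwfStep k s.1 p).2 then 1 else 0)

lemma fwfCost_eq (k : ℕ) (I : List ℕ) : fwfCost k I = (I.foldl (F k) ([], 0)).2 := rfl

lemma F_notmem_lt (k : ℕ) (c : List ℕ) (m p : ℕ) (hp : p ∉ c) (hlt : c.length < k) :
    F k (c, m) p = (p :: c, m + 1) := by
  simp [F, fwfStep, hp, Nat.ne_of_lt hlt]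

lemma F_notmem_full (k : ℕ) (c : List ℕ) (m p : ℕ) (hp : p ∉ c) (hl : c.length = k) :
    F k (c, m) p = ([p], m + 1) := by
  simp [F, fwfStep, hp, hl]

lemma fill (k : ℕ) : ∀ (l c : List ℕ) (m : ℕ), l.Nodup → (∀ p ∈ l, p ∉ c) →
    c.length + l.length ≤ k →
    l.foldl (F k) (c, m) = (l.reverse ++ c, m + l.length)
  | [], c, m, _, _, _ => by simp
  | p :: t, c, m, hnd, hmem, hlen => by
    have hp : p ∉ c := hmem p (by simp)
    have hlt : c.length < k := by simp at hlen; omega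
    rw [List.foldl_cons, F_notmem_lt k c m p hp hlt,
      fill k t (p :: c) (m + 1) hnd.of_cons ?_ ?_]
    · simp; omega
    · intro q hq
      simp only [List.mem_cons, not_or]
      exact ⟨fun h => (List.nodup_cons.1 hnd).1 (h ▸ hq), hmem q (List.mem_cons_of_mem _ hq)⟩
    · simp at hlen ⊢; omega

lemma block_split (k : ℕ) (hk : 2 ≤ k) :
    pathBlock k = 1 :: (List.range' 2 (k - 1) ++ [k + 1] ++ (List.range' 2 (k - 1)).reverse) := by
  have h1 : k + 1 = (k - 1) + 1 + 1 := by omega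
  have h2 : k - 1 + 1 = k := by omega
  rw [pathBlock, h1, List.range'_succ, List.range'_concat]
  simp [h2]
  omega

lemma block_step (k : ℕ) (hk : 2 ≤ k) (c : List ℕ) (m : ℕ)
    (hc : c = [] ∨ c = List.range' 2 k) :
    (pathBlock k).foldl (F k) (c, m) = (List.range' 2 k, m + 2 * k) := by
  rw [block_split k hk, List.foldl_cons]
  have h1 : F k (c, m) 1 = ([1], m + 1) := by
    rcases hc with rfl | rfl
    · rw [F_notmem_lt k [] m 1 (by simp) (by simpa using by omega : ([] : List ℕ).length < k)]
    · rw [F_notmem_full k _ m 1 (by simp [List.mem_range'_1]) (by simp)]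
  rw [h1, List.foldl_append, List.foldl_append,
    fill k (List.range' 2 (k - 1)) [1] (m + 1) (List.nodup_range' (s := 2) (n := k - 1))
      (by intro q hq; simp [List.mem_range'_1] at hq ⊢; omega)
      (by simp; omega)]
  have hD : ((List.range' 2 (k - 1)).reverse ++ [1]).length = k := by simp; omega
  have hK : (k + 1) ∉ (List.range' 2 (k - 1)).reverse ++ [1] := by
    simp [List.mem_range'_1]; omega
  rw [List.foldl_cons, F_notmem_full k _ _ (k + 1) hK hD, List.foldl_nil,
    fill k ((List.range' 2 (k - 1)).reverse) [k + 1] _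
      (List.nodup_reverse.2 (List.nodup_range' (s := 2) (n := k - 1)))
      (by intro q hq; simp [List.mem_range'_1] at hq ⊢; omega)
      (by simp; omega)]
  have hC : List.range' 2 (k - 1) ++ [k + 1] = List.range' 2 k := by
    have : k = (k - 1) + 1 := by omega
    rw [this, List.range'_concat]
    congr 2
    omega
  simp only [List.reverse_reverse, hC, List.length_reverse, List.length_range']
  congr 1
  omega

lemma repeat_fold (k : ℕ) (hk : 2 ≤ k) : ∀ (n : ℕ) (c : List ℕ) (m : ℕ),
    (c = [] ∨ c = List.range' 2 k) →
    ((repeatList (pathBlock k) n).foldl (F k) (c, m)).2 = m + 2 * k * n ∧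
    (((repeatList (pathBlock k) n).foldl (F k) (c, m)).1 = [] ∨
     ((repeatList (pathBlock k) n).foldl (F k) (c, m)).1 = List.range' 2 k)
  | 0, c, m, hc => by simpa [repeatList] using hc
  | n + 1, c, m, hc => by
    have hrep : repeatList (pathBlock k) (n + 1) = pathBlock k ++ repeatList (pathBlock k) n := by
      simp [repeatList, List.replicate_succ]
    rw [hrep, List.foldl_append, block_step k hk c m hc]
    have := repeat_fold k hk n (List.range' 2 k) (m + 2 * k) (Or.inr rfl)
    refine ⟨?_, this.2⟩
    rw [this.1]; ring

end FWFAux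

/-- On `I_n = ⟨1, 2, …, k, k+1, k, …, 2⟩^n`, FWF faults on every request:
`FWF(I_n) = 2kn`. -/



theorem stmt5 (k : ℕ) (hk : 2 ≤ k) :
    ∀ n, fwfCost k (repeatList (pathBlock k) n) = 2 * k * n := by
  intro n
  rw [FWFAux.fwfCost_eq, (FWFAux.repeat_fold k hk n [] 0 (Or.inl rfl)).1, Nat.zero_add]
end

section
/- For the star graph S_N with N ≥ k+1, every complete k-phase of a request sequence respecting S_N has length at least 2(k−1). -/
private lemma star_aux : ∀ (l : List ℕ),
    l.Chain' (fun p q => p = q ∨ p = 0 ∨ q = 0) → l.getLast? = some 0 →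
    2 * (l.toFinset.erase 0).card ≤ l.length
  | [], _, _ => by simp
  | [a], _, h => by
    simp at h
    subst h
    simp
  | a :: b :: t, hc, h => by
    have hc1 : (b :: t).Chain' (fun p q => p = q ∨ p = 0 ∨ q = 0) := hc.tail
    have hrel : a = b ∨ a = 0 ∨ b = 0 := List.isChain_cons_cons.mp hc |>.1
    have hlast : (b :: t).getLast? = some 0 := by
      rwa [List.getLast?_cons_cons] at h
    by_cases ha : a = 0
    · subst ha
      have ih := star_aux (b :: t) hc1 hlast
      have : ((0 :: b :: t).toFinset.erase 0) = ((b :: t).toFinset.erase 0) := by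
        simp [List.toFinset_cons, Finset.erase_insert_eq_erase]
      rw [this]
      calc 2 * ((b :: t).toFinset.erase 0).card ≤ (b :: t).length := ih
        _ ≤ (0 :: b :: t).length := by simp
    · rcases hrel with hab | ha0 | hb0
      · have ih := star_aux (b :: t) hc1 hlast
        have : ((a :: b :: t).toFinset.erase 0) = ((b :: t).toFinset.erase 0) := by
          subst hab; simp [List.toFinset_cons]
        rw [this]
        calc 2 * ((b :: t).toFinset.erase 0).card ≤ (b :: t).length := ih
          _ ≤ (a :: b :: t).length := by simp
      · exact absurd ha0 ha
      · subst hb0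
        rcases t with _ | ⟨c, t'⟩
        · -- l = [a, 0]
          have : ((a :: 0 :: ([] : List ℕ)).toFinset.erase 0).card ≤ 1 := by
            have : ((a :: 0 :: ([] : List ℕ)).toFinset.erase 0) ⊆ {a} := by
              intro x hx
              simp at hx ⊢
              tauto
            calc _ ≤ ({a} : Finset ℕ).card := Finset.card_le_card this
              _ = 1 := Finset.card_singleton a
          simpa using Nat.mul_le_mul_left 2 this
        · have hc2 : (c :: t').Chain' (fun p q => p = q ∨ p = 0 ∨ q = 0) := hc1.tail
          have hlast2 : (c :: t').getLast? = some 0 := by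
            rwa [List.getLast?_cons_cons] at hlast
          have ih := star_aux (c :: t') hc2 hlast2
          have hsub : ((a :: 0 :: c :: t').toFinset.erase 0) ⊆
              insert a ((c :: t').toFinset.erase 0) := by
            intro x hx
            simp at hx ⊢
            tauto
          have hcard : ((a :: 0 :: c :: t').toFinset.erase 0).card ≤
              ((c :: t').toFinset.erase 0).card + 1 := by
            calc _ ≤ (insert a ((c :: t').toFinset.erase 0)).card := Finset.card_le_card hsub
              _ ≤ _ := Finset.card_insert_le _ _
          calc 2 * ((a :: 0 :: c :: t').toFinset.erase 0).card
              ≤ 2 * (((c :: t').toFinset.erase 0).card + 1) := by omega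
            _ = 2 * ((c :: t').toFinset.erase 0).card + 2 := by ring
            _ ≤ (c :: t').length + 2 := by omega
            _ = (a :: 0 :: c :: t').length := by simp

private lemma star_const : ∀ (l : List ℕ),
    l.Chain' (fun p q => p = q ∨ p = 0 ∨ q = 0) → 0 ∉ l →
    ∀ a ∈ l, ∀ b ∈ l, a = b
  | [], _, _ => by simp
  | [y], _, _ => by simp
  | x :: y :: t, hc, h0 => by
    have hxy : x = y := by
      rcases List.isChain_cons_cons.mp hc |>.1 with h | h | h
      · exact h
      · exact absurd (h ▸ List.mem_cons_self (a := x)) h0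
      · exact absurd (h ▸ List.mem_cons_of_mem x (List.mem_cons_self (a := y) (l := t))) h0
    have h0' : 0 ∉ y :: t := fun h => h0 (List.mem_cons_of_mem x h)
    have ih := star_const (y :: t) hc.tail h0'
    intro a ha b hb
    have ha' : a ∈ y :: t := by
      rcases List.mem_cons.mp ha with rfl | ha
      · exact hxy ▸ List.mem_cons_self
      · exact ha
    have hb' : b ∈ y :: t := by
      rcases List.mem_cons.mp hb with rfl | hb
      · exact hxy ▸ List.mem_cons_self
      · exact hb
    exact ih a ha' b hb'

/-- A request sequence respects the star graph `S_N` (center `0`, leaves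
`1, …, N−1`) if all pages are among `0, …, N−1` and any two consecutive
requests are equal or adjacent in the star (i.e. one of them is the center). -/
def RespectsStar (N : ℕ) (I : List ℕ) : Prop :=
  (∀ p ∈ I, p < N) ∧ I.Chain' (fun p q => p = q ∨ p = 0 ∨ q = 0)

/-- For the star graph `S_N` with `N ≥ k + 1`, every complete `k`-phase of a
request sequence respecting `S_N` has length at least `2(k−1)`.  A complete
`k`-phase is a contiguous segment `l` with exactly `k` distinct pages that is
maximal, i.e. the request `q` immediately following it is to a new page. -/
theorem stmt8 (k N : ℕ) (hk : 2 ≤ k) (hN : k + 1 ≤ N)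
    (I : List ℕ) (hresp : RespectsStar N I)
    (pre l post : List ℕ) (q : ℕ) (hI : I = pre ++ l ++ q :: post)
    (hcard : l.toFinset.card = k) (hq : q ∉ l.toFinset) :
    2 * (k - 1) ≤ l.length := by
  obtain ⟨-, hchain⟩ := hresp
  rw [hI, List.append_assoc] at hchain
  replace hchain : List.IsChain _ _ := hchain
  rw [List.isChain_append] at hchain
  obtain ⟨-, hchain, -⟩ := hchain
  rw [List.isChain_append] at hchain
  obtain ⟨hcl, -, hlink⟩ := hchain
  -- l is nonempty
  have hne : l ≠ [] := by
    rintro rfl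
    simp at hcard; omega
  -- 0 ∈ l
  have h0 : 0 ∈ l := by
    by_contra h0
    have hall := star_const l hcl h0
    have hsub : l.toFinset ⊆ {l.head hne} := by
      intro y hy
      simp only [Finset.mem_singleton]
      exact hall y (List.mem_toFinset.mp hy) _ (List.head_mem hne)
    have := Finset.card_le_card hsub
    simp at this
    omega
  -- last of l is 0
  have hlast : l.getLast? = some 0 := by
    have hg : l.getLast hne ∈ l.getLast? := by
      rw [List.getLast?_eq_getLast hne]; simp
    have hq' : q ∈ (q :: post).head? := by simp
    have := hlink _ hg _ hq'
    rcases this with h | h | h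
    · exact absurd (List.mem_toFinset.mpr (h ▸ List.getLast_mem hne)) hq
    · rw [List.getLast?_eq_getLast hne, h]
    · exact absurd (List.mem_toFinset.mpr (h ▸ h0)) hq
  have := star_aux l hcl hlast
  have hek : (l.toFinset.erase 0).card = k - 1 := by
    rw [Finset.card_erase_of_mem (List.mem_toFinset.mpr h0), hcard]
  omega
end

section
/- On the star graph, for the sequence I_n = ⟨P, (B_1, B_2)^n⟩ with P = ⟨1,s,2,s,…,k−1,s⟩, B_1 = ⟨k,s,k−1,s,…,2,s⟩, B_2 = ⟨1,s,2,s,…,k−1,s⟩, LRU faults exactly on the first request of each B_i (plus k faults on P), so LRU(I_n) = 2n + k, while FWF(I_n) = 2kn + k, giving lim (FWF(I_n) − LRU(I_n))/|I_n| = 1/2. -/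
/-- `P = ⟨1, s, 2, s, …, k−1, s⟩` on the star graph, with center `s = 0`. -/
def starP (k : ℕ) : List ℕ := (List.range' 1 (k - 1)).flatMap (fun i => [i, 0])

/-- `B₁ = ⟨k, s, k−1, s, …, 2, s⟩` on the star graph, with center `s = 0`. -/
def starB1 (k : ℕ) : List ℕ := ((List.range' 2 (k - 1)).reverse).flatMap (fun i => [i, 0])

/-- `I_n = ⟨P, (B₁, B₂)^n⟩` where `B₂ = P = ⟨1, s, 2, s, …, k−1, s⟩`. -/
def starSeq9 (k n : ℕ) : List ℕ := starP k ++ repeatList (starB1 k ++ starP k) n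

namespace Star9

def run (step : List ℕ → ℕ → List ℕ × Bool) : List ℕ → List ℕ → List ℕ
  | c, [] => c
  | c, p :: I => run step (step c p).1 I

def cost (step : List ℕ → ℕ → List ℕ × Bool) : List ℕ → List ℕ → ℕ
  | _, [] => 0
  | c, p :: I => (if (step c p).2 then 1 else 0) + cost step (step c p).1 I

lemma foldl_eq (step : List ℕ → ℕ → List ℕ × Bool) :
    ∀ (I : List ℕ) (c : List ℕ) (m : ℕ),
    I.foldl (fun s p => ((step s.1 p).1, s.2 + if (step s.1 p).2 then 1 else 0)) (c, m)
      = (run step c I, m + cost step c I) := by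
  intro I
  induction I with
  | nil => intro c m; simp [run, cost]
  | cons p I ih =>
    intro c m
    simp only [List.foldl_cons, ih, run, cost]
    cases (step c p).2 <;> simp <;> omega

lemma runCost_eq (step : List ℕ → ℕ → List ℕ × Bool) (I : List ℕ) :
    runCost step I = cost step [] I := by
  simp [runCost, foldl_eq]

lemma run_append (step) (c : List ℕ) (I J : List ℕ) :
    run step c (I ++ J) = run step (run step c I) J := by
  induction I generalizing c with
  | nil => simp [run]
  | cons p I ih => simp [run, ih]

lemma cost_append (step) (c : List ℕ) (I J : List ℕ) :
    cost step c (I ++ J) = cost step c I + cost step (run step c I) J := by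
  induction I generalizing c with
  | nil => simp [run, cost]
  | cons p I ih => simp [run, cost, ih]; omega

lemma lru_hit (k : ℕ) {c : List ℕ} {p : ℕ} (h : p ∈ c) :
    lruStep k c p = (p :: c.erase p, false) := by simp [lruStep, h]

lemma lru_miss (k : ℕ) {c : List ℕ} {p : ℕ} (h : p ∉ c) :
    lruStep k c p = ((p :: c).take k, true) := by simp [lruStep, h]

lemma fwf_hit (k : ℕ) {c : List ℕ} {p : ℕ} (h : p ∈ c) :
    fwfStep k c p = (c, false) := by simp [fwfStep, h]

lemma fwf_miss (k : ℕ) {c : List ℕ} {p : ℕ} (h : p ∉ c) (h2 : c.length ≠ k) :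
    fwfStep k c p = (p :: c, true) := by simp [fwfStep, h, h2]

lemma fwf_flush (k : ℕ) {c : List ℕ} {p : ℕ} (h : p ∉ c) (h2 : c.length = k) :
    fwfStep k c p = ([p], true) := by simp [fwfStep, h, h2]

lemma range'_concat' (s n : ℕ) : List.range' s (n + 1) = List.range' s n ++ [s + n] := by
  rw [List.range'_concat]; norm_num

/-- LRU filling phase: new pages arrive while cache is not full. -/
lemma lruFill (k : ℕ) : ∀ t m, 1 ≤ m → m + t + 1 ≤ k →
    run (lruStep k) (0 :: (List.range' 1 m).reverse)
        ((List.range' (m+1) t).flatMap (fun i => [i,0]))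
      = 0 :: (List.range' 1 (m+t)).reverse ∧
    cost (lruStep k) (0 :: (List.range' 1 m).reverse)
        ((List.range' (m+1) t).flatMap (fun i => [i,0])) = t := by
  intro t
  induction t with
  | zero => intro m _ _; simp [run, cost]
  | succ t ih =>
    intro m hm hk
    rw [List.range'_succ, List.flatMap_cons]
    have h1 : (m + 1) ∉ (0 :: (List.range' 1 m).reverse) := by
      simp [List.mem_range'_1]; omega
    have hlen : ((m+1) :: 0 :: (List.range' 1 m).reverse).length ≤ k := by simp; omega
    have hs1 : lruStep k (0 :: (List.range' 1 m).reverse) (m+1)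
        = ((m+1) :: 0 :: (List.range' 1 m).reverse, true) := by
      rw [lru_miss k h1, List.take_of_length_le hlen]
    have h2 : (0 : ℕ) ∈ (m+1) :: 0 :: (List.range' 1 m).reverse := by simp
    have hs2 : lruStep k ((m+1) :: 0 :: (List.range' 1 m).reverse) 0
        = (0 :: (m+1) :: (List.range' 1 m).reverse, false) := by
      rw [lru_hit k h2]
      simp [List.erase_cons, (by omega : m + 1 ≠ 0)]
    have hcache : 0 :: (m+1) :: (List.range' 1 m).reverse
        = 0 :: (List.range' 1 (m+1)).reverse := by
      rw [range'_concat' 1 m]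
      simp [(by omega : 1 + m = m + 1)]
    have := ih (m+1) (by omega) (by omega)
    constructor
    · show run (lruStep k) _ ([m+1, 0] ++ _) = _
      rw [run_append]
      simp only [run, hs1, hs2]
      rw [hcache]
      have harr : m + (t + 1) = m + 1 + t := by omega
      rw [harr]
      exact this.1
    · show cost (lruStep k) _ ([m+1, 0] ++ _) = _
      rw [cost_append]
      simp only [run, cost, hs1, hs2]
      rw [hcache, this.2]
      norm_num
      omega

/-- LRU all-hits phase, ascending requests. -/
lemma lruHitUp (k : ℕ) : ∀ t i,
    run (lruStep k) (0 :: (List.range' 1 i).reverse ++ List.range' (i+1) t)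
        ((List.range' (i+1) t).flatMap (fun j => [j,0]))
      = 0 :: (List.range' 1 (i+t)).reverse ∧
    cost (lruStep k) (0 :: (List.range' 1 i).reverse ++ List.range' (i+1) t)
        ((List.range' (i+1) t).flatMap (fun j => [j,0])) = 0 := by
  intro t
  induction t with
  | zero => intro i; simp [run, cost]
  | succ t ih =>
    intro i
    rw [List.range'_succ, List.flatMap_cons]
    have hnotrev : (i+1) ∉ (List.range' 1 i).reverse := by
      simp [List.mem_range'_1]; omega
    have hmem : (i+1) ∈ 0 :: (List.range' 1 i).reverse ++ (i+1) :: List.range' (i+2) t := by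
      simp
    have herase : (0 :: (List.range' 1 i).reverse ++ (i+1) :: List.range' (i+2) t).erase (i+1)
        = 0 :: (List.range' 1 i).reverse ++ List.range' (i+2) t := by
      show ((0 :: (List.range' 1 i).reverse) ++ (i+1) :: List.range' (i+2) t).erase (i+1) = _
      rw [List.erase_append_right _ (by simpa using hnotrev), List.erase_cons_head]
    have hs1 : lruStep k (0 :: (List.range' 1 i).reverse ++ (i+1) :: List.range' (i+2) t) (i+1)
        = ((i+1) :: 0 :: (List.range' 1 i).reverse ++ List.range' (i+2) t, false) := by
      rw [lru_hit k hmem, herase]; rfl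
    have hmem0 : (0:ℕ) ∈ (i+1) :: 0 :: (List.range' 1 i).reverse ++ List.range' (i+2) t := by
      simp
    have hs2 : lruStep k ((i+1) :: 0 :: (List.range' 1 i).reverse ++ List.range' (i+2) t) 0
        = (0 :: (i+1) :: (List.range' 1 i).reverse ++ List.range' (i+2) t, false) := by
      rw [lru_hit k hmem0]
      simp [List.erase_cons, (by omega : i + 1 ≠ 0)]
    have hcache : (i+1) :: (List.range' 1 i).reverse = (List.range' 1 (i+1)).reverse := by
      rw [range'_concat' 1 i]
      simp [(by omega : 1 + i = i + 1)]
    have H := ih (i+1)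
    constructor
    · show run (lruStep k) _ ([i+1, 0] ++ _) = _
      rw [run_append]
      simp only [run, hs1, hs2]
      rw [show (0 :: (i+1) :: (List.range' 1 i).reverse ++ List.range' (i+2) t)
            = (0 :: (List.range' 1 (i+1)).reverse ++ List.range' (i+1+1) t) by
          rw [← hcache]]
      rw [H.1, (by omega : i + (t+1) = i + 1 + t)]
    · show cost (lruStep k) _ ([i+1, 0] ++ _) = _
      rw [cost_append]
      simp only [run, cost, hs1, hs2]
      rw [show (0 :: (i+1) :: (List.range' 1 i).reverse ++ List.range' (i+2) t)
            = (0 :: (List.range' 1 (i+1)).reverse ++ List.range' (i+1+1) t) by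
          rw [← hcache]]
      rw [H.2]
      norm_num

/-- LRU all-hits phase, descending requests. -/
lemma lruHitDown (k : ℕ) : ∀ t a,
    run (lruStep k) (0 :: List.range' (t+2) a ++ (List.range' 2 t).reverse)
        (((List.range' 2 t).reverse).flatMap (fun j => [j,0]))
      = 0 :: List.range' 2 (t+a) ∧
    cost (lruStep k) (0 :: List.range' (t+2) a ++ (List.range' 2 t).reverse)
        (((List.range' 2 t).reverse).flatMap (fun j => [j,0])) = 0 := by
  intro t
  induction t with
  | zero => intro a; simp [run, cost]
  | succ t ih =>
    intro a
    rw [range'_concat' 2 t, List.reverse_append, List.reverse_singleton, List.singleton_append,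
      List.flatMap_cons]
    have hnot : (2+t) ∉ 0 :: List.range' (t+1+2) a := by
      simp [List.mem_range'_1]; omega
    have hmem : (2+t) ∈ 0 :: List.range' (t+1+2) a ++ (2+t) :: (List.range' 2 t).reverse := by
      simp
    have herase : (0 :: List.range' (t+1+2) a ++ (2+t) :: (List.range' 2 t).reverse).erase (2+t)
        = 0 :: List.range' (t+1+2) a ++ (List.range' 2 t).reverse := by
      show ((0 :: List.range' (t+1+2) a) ++ (2+t) :: (List.range' 2 t).reverse).erase (2+t) = _
      rw [List.erase_append_right _ hnot, List.erase_cons_head]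
    have hs1 : lruStep k (0 :: List.range' (t+1+2) a ++ (2+t) :: (List.range' 2 t).reverse) (2+t)
        = ((2+t) :: 0 :: List.range' (t+1+2) a ++ (List.range' 2 t).reverse, false) := by
      rw [lru_hit k hmem, herase]; rfl
    have hmem0 : (0:ℕ) ∈ (2+t) :: 0 :: List.range' (t+1+2) a ++ (List.range' 2 t).reverse := by
      simp
    have hs2 : lruStep k ((2+t) :: 0 :: List.range' (t+1+2) a ++ (List.range' 2 t).reverse) 0
        = (0 :: (2+t) :: List.range' (t+1+2) a ++ (List.range' 2 t).reverse, false) := by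
      rw [lru_hit k hmem0]
      simp [List.erase_cons, (by omega : 2 + t ≠ 0)]
    have hcache : (2+t) :: List.range' (t+1+2) a = List.range' (t+2) (a+1) := by
      rw [List.range'_succ]
      simp [(by omega : 2 + t = t + 2), (by omega : t + 2 + 1 = t + 1 + 2)]
    have H := ih (a+1)
    constructor
    · show run (lruStep k) _ ([2+t, 0] ++ _) = _
      rw [run_append]
      simp only [run, hs1, hs2]
      rw [show (0 :: (2+t) :: List.range' (t+1+2) a ++ (List.range' 2 t).reverse)
            = (0 :: List.range' (t+2) (a+1) ++ (List.range' 2 t).reverse) by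
          rw [← hcache]]
      rw [H.1, (by omega : t + 1 + a = t + (a+1))]
    · show cost (lruStep k) _ ([2+t, 0] ++ _) = _
      rw [cost_append]
      simp only [run, cost, hs1, hs2]
      rw [show (0 :: (2+t) :: List.range' (t+1+2) a ++ (List.range' 2 t).reverse)
            = (0 :: List.range' (t+2) (a+1) ++ (List.range' 2 t).reverse) by
          rw [← hcache]]
      rw [H.2]
      norm_num

def c0 (k : ℕ) : List ℕ := 0 :: (List.range' 1 (k-1)).reverse
def c1 (k : ℕ) : List ℕ := 0 :: List.range' 2 (k-1)

lemma starP_eq (m : ℕ) : starP (m+2) = [1, 0] ++ (List.range' 2 m).flatMap (fun i => [i,0]) := by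
  show (List.range' 1 (m+2-1)).flatMap (fun i => [i, 0]) = _
  rw [(by omega : m + 2 - 1 = m + 1), List.range'_succ, List.flatMap_cons]

lemma starB1_eq (m : ℕ) :
    starB1 (m+2) = [m+2, 0] ++ ((List.range' 2 m).reverse).flatMap (fun i => [i,0]) := by
  show ((List.range' 2 (m+2-1)).reverse).flatMap (fun i => [i, 0]) = _
  rw [(by omega : m + 2 - 1 = m + 1), range'_concat' 2 m, List.reverse_append,
    List.reverse_singleton, List.singleton_append, List.flatMap_cons,
    (by omega : 2 + m = m + 2)]

lemma lru_P0 (m : ℕ) :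
    run (lruStep (m+2)) [] (starP (m+2)) = c0 (m+2) ∧
    cost (lruStep (m+2)) [] (starP (m+2)) = m + 2 := by
  rw [starP_eq]
  have hs1 : lruStep (m+2) [] 1 = ([1], true) := by
    rw [lru_miss _ (by simp), List.take_of_length_le (by simp)]
  have hs2 : lruStep (m+2) [1] 0 = ([0, 1], true) := by
    rw [lru_miss _ (by simp), List.take_of_length_le (by simp)]
  have hsh : ([0, 1] : List ℕ) = 0 :: (List.range' 1 1).reverse := by simp
  have H := lruFill (m+2) m 1 (by omega) (by omega)
  have hfin : 0 :: (List.range' 1 (1+m)).reverse = c0 (m+2) := by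
    rw [c0, (by omega : m + 2 - 1 = 1 + m)]
  constructor
  · rw [run_append]
    simp only [run, hs1, hs2]
    rw [hsh, H.1, hfin]
  · rw [cost_append]
    simp only [run, cost, hs1, hs2]
    rw [hsh, H.2]
    norm_num
    omega

lemma lru_B1 (m : ℕ) :
    run (lruStep (m+2)) (c0 (m+2)) (starB1 (m+2)) = c1 (m+2) ∧
    cost (lruStep (m+2)) (c0 (m+2)) (starB1 (m+2)) = 1 := by
  rw [starB1_eq]
  have hc0 : c0 (m+2) = 0 :: ((List.range' 2 m).reverse ++ [1]) := by
    rw [c0, (by omega : m + 2 - 1 = m + 1), List.range'_succ, (by omega : 1 + 1 = 2),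
      List.reverse_cons]
  have hnot : (m+2) ∉ (0 : ℕ) :: ((List.range' 2 m).reverse ++ [1]) := by
    simp [List.mem_range'_1]; omega
  have hlen : ((m+2) :: 0 :: (List.range' 2 m).reverse).length = m + 2 := by simp
  have hs1 : lruStep (m+2) (0 :: ((List.range' 2 m).reverse ++ [1])) (m+2)
      = ((m+2) :: 0 :: (List.range' 2 m).reverse, true) := by
    rw [lru_miss _ hnot]
    rw [show ((m+2) :: (0 :: ((List.range' 2 m).reverse ++ [1])))
        = ((m+2) :: 0 :: (List.range' 2 m).reverse) ++ [1] by simp]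
    rw [List.take_left' hlen]
  have hs2 : lruStep (m+2) ((m+2) :: 0 :: (List.range' 2 m).reverse) 0
      = (0 :: (m+2) :: (List.range' 2 m).reverse, false) := by
    rw [lru_hit _ (by simp)]
    simp [List.erase_cons, (by omega : m + 2 ≠ 0)]
  have hsh : 0 :: (m+2) :: (List.range' 2 m).reverse
      = 0 :: List.range' (m+2) 1 ++ (List.range' 2 m).reverse := by
    simp [List.range'_succ]
  have H := lruHitDown (m+2) m 1
  have hfin : 0 :: List.range' 2 (m+1) = c1 (m+2) := by
    rw [c1, (by omega : m + 2 - 1 = m + 1)]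
  constructor
  · rw [hc0, run_append]
    simp only [run, hs1, hs2]
    rw [hsh, H.1, (by omega : m + 1 = m + 1), ← hfin]
  · rw [hc0, cost_append]
    simp only [run, cost, hs1, hs2]
    rw [hsh, H.2]
    norm_num

lemma lru_P1 (m : ℕ) :
    run (lruStep (m+2)) (c1 (m+2)) (starP (m+2)) = c0 (m+2) ∧
    cost (lruStep (m+2)) (c1 (m+2)) (starP (m+2)) = 1 := by
  rw [starP_eq]
  have hc1 : c1 (m+2) = 0 :: (List.range' 2 m ++ [m+2]) := by
    rw [c1, (by omega : m + 2 - 1 = m + 1), range'_concat' 2 m, (by omega : 2 + m = m + 2)]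
  have hnot : (1:ℕ) ∉ (0 : ℕ) :: (List.range' 2 m ++ [m+2]) := by
    simp [List.mem_range'_1]
  have hlen : ((1:ℕ) :: 0 :: List.range' 2 m).length = m + 2 := by simp
  have hs1 : lruStep (m+2) (0 :: (List.range' 2 m ++ [m+2])) 1
      = (1 :: 0 :: List.range' 2 m, true) := by
    rw [lru_miss _ hnot]
    rw [show ((1:ℕ) :: (0 :: (List.range' 2 m ++ [m+2])))
        = ((1:ℕ) :: 0 :: List.range' 2 m) ++ [m+2] by simp]
    rw [List.take_left' hlen]
  have hs2 : lruStep (m+2) (1 :: 0 :: List.range' 2 m) 0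
      = (0 :: 1 :: List.range' 2 m, false) := by
    rw [lru_hit _ (by simp)]
    simp [List.erase_cons]
  have hsh : 0 :: 1 :: List.range' 2 m
      = 0 :: (List.range' 1 1).reverse ++ List.range' 2 m := by
    simp
  have H := lruHitUp (m+2) m 1
  have hfin : 0 :: (List.range' 1 (1+m)).reverse = c0 (m+2) := by
    rw [c0, (by omega : m + 2 - 1 = 1 + m)]
  constructor
  · rw [hc1, run_append]
    simp only [run, hs1, hs2]
    rw [hsh]
    have := H.1
    rw [(by norm_num : (1:ℕ) + 1 = 2)] at this
    rw [this, hfin]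
  · rw [hc1, cost_append]
    simp only [run, cost, hs1, hs2]
    rw [hsh]
    have := H.2
    rw [(by norm_num : (1:ℕ) + 1 = 2)] at this
    rw [this]
    norm_num

def f0 (m : ℕ) : List ℕ := (List.range' 2 m).reverse ++ [0, 1]
def f1 (m : ℕ) : List ℕ := List.range' 2 m ++ [0, m+2]

/-- FWF filling phase, ascending requests. -/
lemma fwfFill (k : ℕ) : ∀ t m, m + t + 2 ≤ k →
    run (fwfStep k) ((List.range' 2 m).reverse ++ [0, 1])
        ((List.range' (m+2) t).flatMap (fun i => [i,0]))
      = (List.range' 2 (m+t)).reverse ++ [0, 1] ∧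
    cost (fwfStep k) ((List.range' 2 m).reverse ++ [0, 1])
        ((List.range' (m+2) t).flatMap (fun i => [i,0])) = t := by
  intro t
  induction t with
  | zero => intro m _; simp [run, cost]
  | succ t ih =>
    intro m hk
    rw [List.range'_succ, List.flatMap_cons]
    have hnot : (m+2) ∉ (List.range' 2 m).reverse ++ [0, 1] := by
      simp [List.mem_range'_1]; omega
    have hlen : ((List.range' 2 m).reverse ++ [0, 1]).length ≠ k := by
      simp; omega
    have hs1 : fwfStep k ((List.range' 2 m).reverse ++ [0, 1]) (m+2)
        = ((m+2) :: ((List.range' 2 m).reverse ++ [0, 1]), true) :=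
      fwf_miss k hnot hlen
    have hs2 : fwfStep k ((m+2) :: ((List.range' 2 m).reverse ++ [0, 1])) 0
        = ((m+2) :: ((List.range' 2 m).reverse ++ [0, 1]), false) :=
      fwf_hit k (by simp)
    have hsh : (m+2) :: ((List.range' 2 m).reverse ++ [0, 1])
        = (List.range' 2 (m+1)).reverse ++ [0, 1] := by
      rw [range'_concat' 2 m, List.reverse_append, List.reverse_singleton,
        List.singleton_append, (by omega : 2 + m = m + 2)]
      rfl
    have H := ih (m+1) (by omega)
    constructor
    · show run (fwfStep k) _ ([m+2, 0] ++ _) = _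
      rw [run_append]
      simp only [run, hs1, hs2]
      rw [hsh]
      have := H.1
      rw [(by omega : m + 1 + 2 = m + 3)] at this
      rw [(by omega : m + 2 + 1 = m + 3), this, (by omega : m + 1 + t = m + (t+1))]
    · show cost (fwfStep k) _ ([m+2, 0] ++ _) = _
      rw [cost_append]
      simp only [run, cost, hs1, hs2]
      rw [hsh]
      have := H.2
      rw [(by omega : m + 1 + 2 = m + 3)] at this
      rw [(by omega : m + 2 + 1 = m + 3), this]
      simp [Nat.add_comm]

/-- FWF filling phase, descending requests. -/
lemma fwfDown (k : ℕ) : ∀ t a, t + a + 2 ≤ k →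
    run (fwfStep k) (List.range' (t+2) a ++ [0, k])
        (((List.range' 2 t).reverse).flatMap (fun i => [i,0]))
      = List.range' 2 (t+a) ++ [0, k] ∧
    cost (fwfStep k) (List.range' (t+2) a ++ [0, k])
        (((List.range' 2 t).reverse).flatMap (fun i => [i,0])) = t := by
  intro t
  induction t with
  | zero => intro a _; simp [run, cost]
  | succ t ih =>
    intro a hk
    rw [range'_concat' 2 t, List.reverse_append, List.reverse_singleton,
      List.singleton_append, List.flatMap_cons]
    have hnot : (2+t) ∉ List.range' (t+1+2) a ++ [0, k] := by
      simp [List.mem_range'_1]; omega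
    have hlen : (List.range' (t+1+2) a ++ [0, k]).length ≠ k := by
      simp; omega
    have hs1 : fwfStep k (List.range' (t+1+2) a ++ [0, k]) (2+t)
        = ((2+t) :: (List.range' (t+1+2) a ++ [0, k]), true) :=
      fwf_miss k hnot hlen
    have hs2 : fwfStep k ((2+t) :: (List.range' (t+1+2) a ++ [0, k])) 0
        = ((2+t) :: (List.range' (t+1+2) a ++ [0, k]), false) :=
      fwf_hit k (by simp)
    have hsh : (2+t) :: (List.range' (t+1+2) a ++ [0, k])
        = List.range' (t+2) (a+1) ++ [0, k] := by
      rw [List.range'_succ, (by omega : 2 + t = t + 2), (by omega : t + 2 + 1 = t + 1 + 2)]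
      rfl
    have H := ih (a+1) (by omega)
    constructor
    · show run (fwfStep k) _ ([2+t, 0] ++ _) = _
      rw [run_append]
      simp only [run, hs1, hs2]
      rw [hsh, H.1, (by omega : t + (a+1) = t + 1 + a)]
    · show cost (fwfStep k) _ ([2+t, 0] ++ _) = _
      rw [cost_append]
      simp only [run, cost, hs1, hs2]
      rw [hsh, H.2]
      simp [Nat.add_comm]

lemma fwf_P0 (m : ℕ) :
    run (fwfStep (m+2)) [] (starP (m+2)) = f0 m ∧
    cost (fwfStep (m+2)) [] (starP (m+2)) = m + 2 := by
  rw [starP_eq]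
  have hs1 : fwfStep (m+2) [] 1 = ([1], true) := fwf_miss _ (by simp) (by simp)
  have hs2 : fwfStep (m+2) [1] 0 = ([0, 1], true) := fwf_miss _ (by simp) (by simp)
  have hsh : ([0, 1] : List ℕ) = (List.range' 2 0).reverse ++ [0, 1] := by simp
  have H := fwfFill (m+2) m 0 (by omega)
  constructor
  · rw [run_append]
    simp only [run, hs1, hs2]
    rw [hsh]
    have := H.1
    rw [(by omega : 0 + 2 = 2)] at this
    rw [this, f0, (by omega : 0 + m = m)]
  · rw [cost_append]
    simp only [run, cost, hs1, hs2]
    rw [hsh]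
    have := H.2
    rw [(by omega : 0 + 2 = 2)] at this
    rw [this]
    norm_num
    omega

lemma fwf_B1 (m : ℕ) :
    run (fwfStep (m+2)) (f0 m) (starB1 (m+2)) = f1 m ∧
    cost (fwfStep (m+2)) (f0 m) (starB1 (m+2)) = m + 2 := by
  rw [starB1_eq, f0]
  have hnot : (m+2) ∉ (List.range' 2 m).reverse ++ [0, 1] := by
    simp [List.mem_range'_1]; omega
  have hlen : ((List.range' 2 m).reverse ++ [0, 1]).length = m + 2 := by simp
  have hs1 : fwfStep (m+2) ((List.range' 2 m).reverse ++ [0, 1]) (m+2)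
      = ([m+2], true) := fwf_flush _ hnot hlen
  have hs2 : fwfStep (m+2) [m+2] 0 = ([0, m+2], true) :=
    fwf_miss _ (by simp) (by simp)
  have hsh : ([0, m+2] : List ℕ) = List.range' (m+2) 0 ++ [0, m+2] := by simp
  have H := fwfDown (m+2) m 0 (by omega)
  constructor
  · rw [run_append]
    simp only [run, hs1, hs2]
    rw [hsh, H.1, f1, (by omega : m + 0 = m)]
  · rw [cost_append]
    simp only [run, cost, hs1, hs2]
    rw [hsh, H.2]
    simp [Nat.add_comm]

lemma fwf_P1 (m : ℕ) :
    run (fwfStep (m+2)) (f1 m) (starP (m+2)) = f0 m ∧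
    cost (fwfStep (m+2)) (f1 m) (starP (m+2)) = m + 2 := by
  rw [starP_eq, f1]
  have hnot : (1:ℕ) ∉ List.range' 2 m ++ [0, m+2] := by
    simp [List.mem_range'_1]
  have hlen : (List.range' 2 m ++ [0, m+2]).length = m + 2 := by simp
  have hs1 : fwfStep (m+2) (List.range' 2 m ++ [0, m+2]) 1
      = ([1], true) := fwf_flush _ hnot hlen
  have hs2 : fwfStep (m+2) [1] 0 = ([0, 1], true) :=
    fwf_miss _ (by simp) (by simp)
  have hsh : ([0, 1] : List ℕ) = (List.range' 2 0).reverse ++ [0, 1] := by simp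
  have H := fwfFill (m+2) m 0 (by omega)
  constructor
  · rw [run_append]
    simp only [run, hs1, hs2]
    rw [hsh]
    have := H.1
    rw [(by omega : 0 + 2 = 2)] at this
    rw [this, f0, (by omega : 0 + m = m)]
  · rw [cost_append]
    simp only [run, cost, hs1, hs2]
    rw [hsh]
    have := H.2
    rw [(by omega : 0 + 2 = 2)] at this
    rw [this]
    norm_num
    omega

lemma repeatList_succ (l : List ℕ) (n : ℕ) :
    repeatList l (n+1) = l ++ repeatList l n := by
  simp [repeatList, List.replicate_succ]

lemma lru_repeat (m : ℕ) : ∀ n,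
    run (lruStep (m+2)) (c0 (m+2)) (repeatList (starB1 (m+2) ++ starP (m+2)) n) = c0 (m+2) ∧
    cost (lruStep (m+2)) (c0 (m+2)) (repeatList (starB1 (m+2) ++ starP (m+2)) n) = 2 * n := by
  intro n
  induction n with
  | zero => simp [repeatList, run, cost]
  | succ n ih =>
    rw [repeatList_succ]
    constructor
    · rw [run_append, run_append, (lru_B1 m).1, (lru_P1 m).1, ih.1]
    · rw [cost_append, cost_append, run_append, (lru_B1 m).1, (lru_B1 m).2,
        (lru_P1 m).1, (lru_P1 m).2, ih.2]
      omega

lemma fwf_repeat (m : ℕ) : ∀ n,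
    run (fwfStep (m+2)) (f0 m) (repeatList (starB1 (m+2) ++ starP (m+2)) n) = f0 m ∧
    cost (fwfStep (m+2)) (f0 m) (repeatList (starB1 (m+2) ++ starP (m+2)) n)
      = 2 * (m+2) * n := by
  intro n
  induction n with
  | zero => simp [repeatList, run, cost]
  | succ n ih =>
    rw [repeatList_succ]
    constructor
    · rw [run_append, run_append, (fwf_B1 m).1, (fwf_P1 m).1, ih.1]
    · rw [cost_append, cost_append, run_append, (fwf_B1 m).1, (fwf_B1 m).2,
        (fwf_P1 m).1, (fwf_P1 m).2, ih.2]
      ring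

lemma lruCost_starSeq (m n : ℕ) : lruCost (m+2) (starSeq9 (m+2) n) = 2 * n + (m+2) := by
  rw [lruCost, runCost_eq, starSeq9, cost_append, (lru_P0 m).1, (lru_P0 m).2,
    (lru_repeat m n).2]
  omega

lemma fwfCost_starSeq (m n : ℕ) : fwfCost (m+2) (starSeq9 (m+2) n) = 2 * (m+2) * n + (m+2) := by
  rw [fwfCost, runCost_eq, starSeq9, cost_append, (fwf_P0 m).1, (fwf_P0 m).2,
    (fwf_repeat m n).2]
  omega

lemma flatMap_pair_length (l : List ℕ) : (l.flatMap (fun i => [i, 0])).length = 2 * l.length := by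
  induction l with
  | nil => simp
  | cons a l ih => simp [ih]; omega

lemma repeatList_length (l : List ℕ) (n : ℕ) :
    (repeatList l n).length = n * l.length := by
  induction n with
  | zero => simp [repeatList]
  | succ n ih => rw [repeatList_succ]; simp [ih]; ring

lemma starSeq_length (m n : ℕ) :
    (starSeq9 (m+2) n).length = 2 * (m+1) * (2 * n + 1) := by
  rw [starSeq9, List.length_append, repeatList_length, List.length_append]
  rw [show starP (m+2) = (List.range' 1 (m+2-1)).flatMap (fun i => [i,0]) from rfl]
  rw [show starB1 (m+2) = ((List.range' 2 (m+2-1)).reverse).flatMap (fun i => [i,0]) from rfl]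
  rw [flatMap_pair_length, flatMap_pair_length]
  simp [(by omega : m + 2 - 1 = m + 1)]
  ring

lemma aux_tendsto : Filter.Tendsto (fun n : ℕ => (n : ℝ) / (2 * n + 1))
    Filter.atTop (nhds (1 / 2)) := by
  have h2 : Filter.Tendsto (fun n : ℕ => 2 + ((n : ℝ))⁻¹) Filter.atTop (nhds 2) := by
    simpa using tendsto_const_nhds.add (tendsto_inv_atTop_nhds_zero_nat (𝕜 := ℝ))
  have h3 : Filter.Tendsto (fun n : ℕ => 1 / (2 + ((n : ℝ))⁻¹)) Filter.atTop (nhds (1 / 2)) :=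
    Filter.Tendsto.div tendsto_const_nhds h2 (by norm_num)
  refine h3.congr' ?_
  filter_upwards [Filter.eventually_ge_atTop 1] with n hn
  have hn0 : (n : ℝ) ≠ 0 := by positivity
  have hd : (2 * (n : ℝ) + 1) ≠ 0 := by positivity
  field_simp

end Star9


open Filter in
/-- On the star graph, LRU faults exactly on the first request of each `B_i`
(plus `k` faults on `P`), so `LRU(I_n) = 2n + k`, while `FWF(I_n) = 2kn + k`,
giving `(FWF(I_n) − LRU(I_n))/|I_n| → 1/2`. -/
theorem stmt9 (k N : ℕ) (hk : 2 ≤ k) (hN : k + 1 ≤ N) :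
    (∀ n, lruCost k (starSeq9 k n) = 2 * n + k ∧
      fwfCost k (starSeq9 k n) = 2 * k * n + k) ∧
    Tendsto
      (fun n : ℕ =>
        ((fwfCost k (starSeq9 k n) : ℝ) - (lruCost k (starSeq9 k n) : ℝ)) /
          ((starSeq9 k n).length : ℝ))
      atTop (nhds (1 / 2)) := by
  obtain ⟨m, rfl⟩ : ∃ m, k = m + 2 := ⟨k - 2, by omega⟩
  refine ⟨fun n => ⟨?_, ?_⟩, ?_⟩
  · rw [Star9.lruCost_starSeq]
  · rw [Star9.fwfCost_starSeq]
  · have heq : ∀ n : ℕ,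
        ((fwfCost (m+2) (starSeq9 (m+2) n) : ℝ) - (lruCost (m+2) (starSeq9 (m+2) n) : ℝ)) /
          ((starSeq9 (m+2) n).length : ℝ) = (n : ℝ) / (2 * n + 1) := by
      intro n
      rw [Star9.lruCost_starSeq, Star9.fwfCost_starSeq, Star9.starSeq_length]
      have hd : (2 * ((m:ℝ) + 1) * (2 * n + 1)) ≠ 0 := by positivity
      have hd2 : (2 * (n:ℝ) + 1) ≠ 0 := by positivity
      push_cast
      field_simp
      ring
    exact Filter.Tendsto.congr (fun n => (heq n).symm) Star9.aux_tendsto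
end

section
/- On the star graph, for I_n = ⟨P, J^n⟩ with P = ⟨1,s,…,k−1,s,k−2,s,…,1,s⟩ and J = B^{k−1} where B = ⟨k,s,k−1,s,…,1,s⟩, LRU(I_n) = k + (k−1)kn and FIFO(I_n) = k + (k+1)n, so lim (FIFO(I_n) − LRU(I_n))/|I_n| = −1/2 + (k+1)/(2k(k−1)). -/
/-- `P = ⟨1,s,2,s,…,k−1,s,k−2,s,…,1,s⟩` on the star graph, center `s = 0`. -/
def starP16 (k : ℕ) : List ℕ :=
  (List.range' 1 (k - 1) ++ (List.range' 1 (k - 2)).reverse).flatMap (fun i => [i, 0])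

/-- `B = ⟨k,s,k−1,s,…,1,s⟩` on the star graph, center `s = 0`. -/
def starB16 (k : ℕ) : List ℕ := ((List.range' 1 k).reverse).flatMap (fun i => [i, 0])

/-- `I_n = ⟨P, J^n⟩` where `J = B^{k−1}`. -/
def starSeq16 (k n : ℕ) : List ℕ :=
  starP16 k ++ repeatList (repeatList (starB16 k) (k - 1)) n

namespace Star16

def pair (i : ℕ) : List ℕ := [i, 0]

def run (step : List ℕ → ℕ → List ℕ × Bool) (c : List ℕ) (I : List ℕ) : List ℕ × ℕ :=
  I.foldl (fun s p => ((step s.1 p).1, s.2 + if (step s.1 p).2 then 1 else 0)) (c, 0)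

lemma run_nil (step) (c : List ℕ) : run step c [] = (c, 0) := rfl

lemma foldl_shift (step : List ℕ → ℕ → List ℕ × Bool) (I : List ℕ) : ∀ (c : List ℕ) (a : ℕ),
    I.foldl (fun s p => ((step s.1 p).1, s.2 + if (step s.1 p).2 then 1 else 0)) (c, a)
    = ((I.foldl (fun s p => ((step s.1 p).1, s.2 + if (step s.1 p).2 then 1 else 0)) (c, 0)).1,
        a + (I.foldl (fun s p => ((step s.1 p).1, s.2 + if (step s.1 p).2 then 1 else 0)) (c, 0)).2) := by
  induction I with
  | nil => intro c a; simp
  | cons p l ih =>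
    intro c a
    simp only [List.foldl_cons]
    rw [ih ((step c p).1) (a + _), ih ((step c p).1) (0 + _)]
    simp only [Prod.mk.injEq]
    refine ⟨by trivial, by omega⟩

lemma run_cons (step) (c : List ℕ) (p : ℕ) (l : List ℕ) :
    run step c (p :: l) =
      ((run step (step c p).1 l).1,
        (if (step c p).2 then 1 else 0) + (run step (step c p).1 l).2) := by
  show List.foldl _ _ (p :: l) = _
  rw [List.foldl_cons]
  show List.foldl _ ((step c p).1, 0 + _) l = _
  rw [foldl_shift]
  show ((run step (step c p).1 l).1,
      (0 + if (step c p).2 then 1 else 0) + (run step (step c p).1 l).2) = _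
  simp only [Prod.mk.injEq]
  refine ⟨by trivial, by omega⟩

lemma run_append (step) (c : List ℕ) (l₁ l₂ : List ℕ) :
    run step c (l₁ ++ l₂) =
      ((run step (run step c l₁).1 l₂).1,
        (run step c l₁).2 + (run step (run step c l₁).1 l₂).2) := by
  show List.foldl _ _ (l₁ ++ l₂) = _
  rw [List.foldl_append]
  show List.foldl _ ((run step c l₁).1, (run step c l₁).2) l₂ = _
  rw [foldl_shift]
  rfl

lemma run_append_eq {step} {c c₁ c₂ : List ℕ} {a₁ a₂ : ℕ} {l₁ l₂ : List ℕ}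
    (h₁ : run step c l₁ = (c₁, a₁)) (h₂ : run step c₁ l₂ = (c₂, a₂)) :
    run step c (l₁ ++ l₂) = (c₂, a₁ + a₂) := by
  rw [run_append, h₁, h₂]

lemma repeatList_zero (l : List ℕ) : repeatList l 0 = [] := rfl

lemma repeatList_succ (l : List ℕ) (n : ℕ) : repeatList l (n + 1) = l ++ repeatList l n := by
  simp [repeatList, List.replicate_succ]

lemma repeatList_one (l : List ℕ) : repeatList l 1 = l := by
  simp [repeatList]

lemma repeatList_add (l : List ℕ) (m n : ℕ) :
    repeatList l (m + n) = repeatList l m ++ repeatList l n := by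
  simp only [repeatList]
  rw [List.replicate_add, List.flatten_append]

lemma run_repeat {step} {c : List ℕ} {a : ℕ} {l : List ℕ}
    (h : run step c l = (c, a)) : ∀ n, run step c (repeatList l n) = (c, n * a) := by
  intro n
  induction n with
  | zero => simp [repeatList_zero, run_nil]
  | succ n ih =>
    rw [repeatList_succ, run_append_eq h ih]
    congr 1
    ring

lemma lruStep_hit {k : ℕ} {c : List ℕ} {p : ℕ} (h : p ∈ c) :
    lruStep k c p = (p :: c.erase p, false) := by simp [lruStep, h]

lemma lruStep_miss {k : ℕ} {c : List ℕ} {p : ℕ} (h : p ∉ c) :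
    lruStep k c p = ((p :: c).take k, true) := by simp [lruStep, h]

lemma fifoStep_hit {k : ℕ} {c : List ℕ} {p : ℕ} (h : p ∈ c) :
    fifoStep k c p = (c, false) := by simp [fifoStep, h]

lemma fifoStep_miss {k : ℕ} {c : List ℕ} {p : ℕ} (h : p ∉ c) :
    fifoStep k c p = ((p :: c).take k, true) := by simp [fifoStep, h]

lemma fifo_hits {k : ℕ} {c : List ℕ} {l : List ℕ} (h : ∀ p ∈ l, p ∈ c) :
    run (fifoStep k) c l = (c, 0) := by
  induction l with
  | nil => exact run_nil _ _
  | cons p t ih =>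
    rw [run_cons, fifoStep_hit (h p List.mem_cons_self)]
    show ((run (fifoStep k) c t).1, (if false = true then 1 else 0) + (run (fifoStep k) c t).2)
      = (c, 0)
    rw [ih (fun q hq => h q (List.mem_cons_of_mem _ hq))]
    rfl

lemma mem_flatMap_pair {l : List ℕ} {p : ℕ} (h : p ∈ l.flatMap pair) : p = 0 ∨ p ∈ l := by
  simp only [List.mem_flatMap, pair, List.mem_cons, List.not_mem_nil, or_false] at h
  obtain ⟨a, ha, h⟩ := h
  rcases h with h | h
  · exact Or.inr (h ▸ ha)
  · exact Or.inl h

end Star16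


namespace Star16

lemma range'_split (s n m : ℕ) (h : m ≤ n) :
    List.range' s n = List.range' s m ++ List.range' (s + m) (n - m) := by
  conv_lhs => rw [show n = (n - m) + m by omega]
  rw [show n - m + m = m + (n - m) by omega, ← List.range'_append, one_mul]

lemma range'_concat1 (s n : ℕ) (h : 1 ≤ n) :
    List.range' s n = List.range' s (n - 1) ++ [s + (n - 1)] := by
  conv_lhs => rw [show n = (n - 1) + 1 by omega]
  rw [List.range'_concat, one_mul]

lemma range'_cons (s n : ℕ) (h : 1 ≤ n) :
    List.range' s n = s :: List.range' (s + 1) (n - 1) := by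
  conv_lhs => rw [show n = (n - 1) + 1 by omega]
  rw [List.range'_succ]

lemma seg_decomp (j : ℕ) :
    ((List.range' 1 (j + 1)).reverse).flatMap pair
      = (j + 1) :: 0 :: ((List.range' 1 j).reverse).flatMap pair := by
  rw [List.range'_concat, one_mul, List.reverse_append]
  simp [pair]
  omega

/-- Processing `⟨j, s, j-1, s, …, 1, s⟩` by LRU. -/
lemma lru_B_seg (k : ℕ) (hk : 3 ≤ k) : ∀ j, 1 ≤ j → j ≤ k →
    run (lruStep k) (0 :: (List.range' (j + 1) (k - j) ++ List.range' 1 (j - 1)))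
      (((List.range' 1 j).reverse).flatMap pair)
    = (0 :: List.range' 1 (k - 1), j) := by
  intro j
  induction j with
  | zero => intro h; omega
  | succ j ih =>
    intro _ hjk
    rw [seg_decomp]
    by_cases hj0 : j = 0
    · -- base case j+1 = 1
      subst hj0
      show run (lruStep k) (0 :: (List.range' 2 (k - 1) ++ [])) [1, 0]
          = (0 :: List.range' 1 (k - 1), 1)
      rw [List.append_nil]
      have h1 : (1 : ℕ) ∉ (0 :: List.range' 2 (k - 1)) := by
        simp [List.mem_range'_1]
      rw [run_cons, lruStep_miss h1]
      have e1 : (1 :: 0 :: List.range' 2 (k - 1)) = (1 :: 0 :: List.range' 2 (k - 2)) ++ [k] := by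
        rw [range'_concat1 2 (k - 1) (by omega)]
        rw [show k - 1 - 1 = k - 2 by omega, show 2 + (k - 2) = k by omega]
        simp
      rw [show ((1 :: 0 :: List.range' 2 (k - 1)).take k) = (1 :: 0 :: List.range' 2 (k - 2))
          from by rw [e1]; exact List.take_left' (by simp; omega)]
      have h0 : (0 : ℕ) ∈ (1 :: 0 :: List.range' 2 (k - 2)) := by simp
      rw [run_cons, lruStep_hit h0]
      rw [List.erase_cons_tail (by simp), List.erase_cons_head]
      rw [run_nil]
      have e2 : (0 :: 1 :: List.range' 2 (k - 2)) = 0 :: List.range' 1 (k - 1) := by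
        rw [range'_cons 1 (k - 1) (by omega)]
        rw [show k - 1 - 1 = k - 2 by omega]
      rw [e2]
      rfl
    · -- step case: j ≥ 1
      have hj1 : 1 ≤ j := by omega
      simp only [Nat.add_sub_cancel]
      -- request j+1 : miss
      have hmiss : (j + 1 : ℕ) ∉
          (0 :: (List.range' (j + 1 + 1) (k - (j + 1)) ++ List.range' 1 j)) := by
        simp [List.mem_range'_1]; omega
      rw [run_cons, lruStep_miss hmiss]
      -- take k : evict j (last of range' 1 j)
      have e1 : ((j+1) :: 0 :: (List.range' (j + 1 + 1) (k - (j + 1)) ++ List.range' 1 j))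
          = ((j+1) :: 0 :: (List.range' (j + 1 + 1) (k - (j + 1)) ++ List.range' 1 (j - 1)))
            ++ [j] := by
        rw [range'_concat1 1 j (by omega)]
        have : (1:ℕ) + (j - 1) = j := by omega
        rw [this]
        simp
      rw [show (((j+1) :: 0 :: (List.range' (j + 1 + 1) (k - (j + 1)) ++ List.range' 1 j)).take k)
          = ((j+1) :: 0 :: (List.range' (j + 1 + 1) (k - (j + 1)) ++ List.range' 1 (j - 1)))
          from by
        rw [e1]; exact List.take_left' (by simp; omega)]
      -- request 0 : hit
      have h0 : (0:ℕ) ∈ ((j+1) :: 0 :: (List.range' (j + 1 + 1) (k - (j + 1))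
          ++ List.range' 1 (j - 1))) := by simp
      rw [run_cons, lruStep_hit h0]
      rw [List.erase_cons_tail (by simp), List.erase_cons_head]
      -- now cache is C j
      have e2 : (0 :: (j+1) :: (List.range' (j + 1 + 1) (k - (j + 1)) ++ List.range' 1 (j - 1)))
          = 0 :: (List.range' (j + 1) (k - j) ++ List.range' 1 (j - 1)) := by
        rw [range'_cons (j+1) (k-j) (by omega)]
        have : k - j - 1 = k - (j + 1) := by omega
        rw [this]
        simp
      rw [e2, ih hj1 (by omega)]
      simp [Prod.ext_iff]
      omega

/-- LRU on one block `B` from the steady-state cache. -/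
lemma lru_B (k : ℕ) (hk : 3 ≤ k) :
    run (lruStep k) (0 :: List.range' 1 (k - 1)) (((List.range' 1 k).reverse).flatMap pair)
      = (0 :: List.range' 1 (k - 1), k) := by
  have h := lru_B_seg k hk k (by omega) le_rfl
  have e : (0 :: (List.range' (k + 1) (k - k) ++ List.range' 1 (k - 1)))
      = 0 :: List.range' 1 (k - 1) := by simp
  rw [e] at h
  exact h

end Star16

namespace Star16

lemma rev_range'_succ (j : ℕ) :
    (List.range' 1 (j + 1)).reverse = (j + 1) :: (List.range' 1 j).reverse := by
  rw [List.range'_concat, one_mul, List.reverse_append]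
  simp
  omega

/-- LRU on the increasing phase of `P`. -/
lemma lru_P1 (k : ℕ) (hk : 3 ≤ k) : ∀ m, 1 ≤ m → m ≤ k - 1 →
    run (lruStep k) [] ((List.range' 1 m).flatMap pair)
      = (0 :: (List.range' 1 m).reverse, m + 1) := by
  intro m
  induction m with
  | zero => intro h; omega
  | succ m ih =>
    intro _ hmk
    by_cases hm0 : m = 0
    · subst hm0
      show run (lruStep k) [] [1, 0] = (0 :: (List.range' 1 1).reverse, 2)
      have h1 : (1 : ℕ) ∉ ([] : List ℕ) := by simp
      rw [run_cons, lruStep_miss h1]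
      rw [show (([1] : List ℕ).take k) = [1] from List.take_of_length_le (by simp; omega)]
      have h0 : (0 : ℕ) ∉ ([1] : List ℕ) := by simp
      rw [run_cons, lruStep_miss h0]
      rw [show (([0, 1] : List ℕ).take k) = [0, 1] from List.take_of_length_le (by simp; omega)]
      rw [run_nil]
      simp [List.range'_one]
    · have hm1 : 1 ≤ m := by omega
      have e0 : (List.range' 1 (m + 1)).flatMap pair
          = (List.range' 1 m).flatMap pair ++ pair (m + 1) := by
        rw [List.range'_concat, one_mul, List.flatMap_append,
          show 1 + m = m + 1 by omega]
        simp
      rw [e0]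
      refine run_append_eq (ih hm1 (by omega)) ?_
      show run (lruStep k) (0 :: (List.range' 1 m).reverse) [m + 1, 0]
          = (0 :: (List.range' 1 (m + 1)).reverse, 1)
      have hmiss : (m + 1 : ℕ) ∉ (0 :: (List.range' 1 m).reverse) := by
        simp only [List.mem_cons, List.mem_reverse, List.mem_range'_1] <;> omega
      rw [run_cons, lruStep_miss hmiss]
      rw [show (((m+1) :: 0 :: (List.range' 1 m).reverse).take k)
          = ((m+1) :: 0 :: (List.range' 1 m).reverse) from
        List.take_of_length_le (by simp; omega)]
      have h0 : (0 : ℕ) ∈ ((m+1) :: 0 :: (List.range' 1 m).reverse) := by simp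
      rw [run_cons, lruStep_hit h0]
      rw [List.erase_cons_tail (by simp), List.erase_cons_head]
      rw [run_nil, rev_range'_succ]
      rfl

/-- LRU on the decreasing phase of `P` (all hits). -/
lemma lru_P2 (k : ℕ) (hk : 3 ≤ k) : ∀ j, j ≤ k - 2 →
    run (lruStep k) (0 :: (List.range' (j + 1) (k - 1 - j) ++ (List.range' 1 j).reverse))
      (((List.range' 1 j).reverse).flatMap pair)
    = (0 :: List.range' 1 (k - 1), 0) := by
  intro j
  induction j with
  | zero =>
    intro _
    simp only [List.range'_zero, List.reverse_nil, List.append_nil, List.flatMap_nil]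
    rw [run_nil]
    norm_num
  | succ j ih =>
    intro hjk
    rw [seg_decomp, rev_range'_succ]
    have hhit : (j + 1 : ℕ) ∈ (0 :: (List.range' (j + 1 + 1) (k - 1 - (j + 1))
        ++ ((j + 1) :: (List.range' 1 j).reverse))) := by simp
    rw [run_cons, lruStep_hit hhit]
    rw [List.erase_cons_tail (by simp),
      List.erase_append_right _ (by simp only [List.mem_range'_1] <;> omega),
      List.erase_cons_head]
    have h0 : (0 : ℕ) ∈ ((j+1) :: 0 :: (List.range' (j + 1 + 1) (k - 1 - (j + 1))
        ++ (List.range' 1 j).reverse)) := by simp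
    rw [run_cons, lruStep_hit h0]
    rw [List.erase_cons_tail (by simp), List.erase_cons_head]
    have e2 : (0 :: (j+1) :: (List.range' (j + 1 + 1) (k - 1 - (j + 1))
          ++ (List.range' 1 j).reverse))
        = 0 :: (List.range' (j + 1) (k - 1 - j) ++ (List.range' 1 j).reverse) := by
      rw [range'_cons (j + 1) (k - 1 - j) (by omega)]
      rw [show k - 1 - j - 1 = k - 1 - (j + 1) by omega]
      simp
    rw [e2, ih (by omega)]
    rfl

/-- LRU on all of `P`. -/
lemma lru_P (k : ℕ) (hk : 3 ≤ k) :
    run (lruStep k) [] (starP16 k) = (0 :: List.range' 1 (k - 1), k) := by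
  show run (lruStep k) []
      ((List.range' 1 (k - 1) ++ (List.range' 1 (k - 2)).reverse).flatMap pair) = _
  rw [List.flatMap_append]
  have h2 := lru_P2 k hk (k - 2) le_rfl
  have ecache : (0 :: (List.range' (k - 2 + 1) (k - 1 - (k - 2))
        ++ (List.range' 1 (k - 2)).reverse))
      = 0 :: (List.range' 1 (k - 1)).reverse := by
    rw [show k - 1 - (k - 2) = 1 by omega, List.range'_one,
      show k - 1 = (k - 2) + 1 by omega, rev_range'_succ]
    simp
  rw [ecache] at h2
  have h := run_append_eq (lru_P1 k hk (k - 1) (by omega) le_rfl) h2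
  rw [h]
  rw [show k - 1 + 1 + 0 = k by omega]

/-- LRU on the whole sequence `I_n`. -/
lemma lru_run (k : ℕ) (hk : 3 ≤ k) (n : ℕ) :
    run (lruStep k) [] (starSeq16 k n)
      = (0 :: List.range' 1 (k - 1), k + n * ((k - 1) * k)) := by
  show run (lruStep k) [] (starP16 k ++ repeatList (repeatList (starB16 k) (k - 1)) n) = _
  refine run_append_eq (lru_P k hk) ?_
  have hB : run (lruStep k) (0 :: List.range' 1 (k - 1)) (starB16 k)
      = (0 :: List.range' 1 (k - 1), k) := by
    show run (lruStep k) (0 :: List.range' 1 (k - 1))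
        (((List.range' 1 k).reverse).flatMap pair) = _
    exact lru_B k hk
  have hJ := run_repeat hB (k - 1)
  exact run_repeat hJ n

end Star16

namespace Star16

/-- FIFO steady-state cache after `P` / after each `J`. -/
def Dcache (k : ℕ) : List ℕ := (List.range' 2 (k - 2)).reverse ++ [0, 1]

/-- FIFO cache just before the `c`-th copy of `B` inside a `J` (`2 ≤ c ≤ k-1`). -/
def Ecache (k c : ℕ) : List ℕ :=
  (List.range' 2 (c - 2)).reverse ++ 0 :: 1 :: k :: (List.range' (c + 1) (k - 1 - c)).reverse

/-- FIFO on the increasing phase of `P`. -/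
lemma fifo_P1 (k : ℕ) (hk : 3 ≤ k) : ∀ m, 1 ≤ m → m ≤ k - 1 →
    run (fifoStep k) [] ((List.range' 1 m).flatMap pair)
      = ((List.range' 2 (m - 1)).reverse ++ [0, 1], m + 1) := by
  intro m
  induction m with
  | zero => intro h; omega
  | succ m ih =>
    intro _ hmk
    by_cases hm0 : m = 0
    · subst hm0
      show run (fifoStep k) [] [1, 0] = ((List.range' 2 0).reverse ++ [0, 1], 2)
      have h1 : (1 : ℕ) ∉ ([] : List ℕ) := by simp
      rw [run_cons, fifoStep_miss h1]
      rw [show (([1] : List ℕ).take k) = [1] from List.take_of_length_le (by simp; omega)]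
      have h0 : (0 : ℕ) ∉ ([1] : List ℕ) := by simp
      rw [run_cons, fifoStep_miss h0]
      rw [show (([0, 1] : List ℕ).take k) = [0, 1] from List.take_of_length_le (by simp; omega)]
      rw [run_nil]
      simp
    · have hm1 : 1 ≤ m := by omega
      have e0 : (List.range' 1 (m + 1)).flatMap pair
          = (List.range' 1 m).flatMap pair ++ pair (m + 1) := by
        rw [List.range'_concat, one_mul, List.flatMap_append,
          show 1 + m = m + 1 by omega]
        simp
      rw [e0]
      refine run_append_eq (ih hm1 (by omega)) ?_
      show run (fifoStep k) ((List.range' 2 (m - 1)).reverse ++ [0, 1]) [m + 1, 0]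
          = ((List.range' 2 (m + 1 - 1)).reverse ++ [0, 1], 1)
      have hmiss : (m + 1 : ℕ) ∉ ((List.range' 2 (m - 1)).reverse ++ [0, 1]) := by
        simp only [List.mem_append, List.mem_reverse, List.mem_range'_1, List.mem_cons,
          List.not_mem_nil, or_false] <;> omega
      rw [run_cons, fifoStep_miss hmiss]
      rw [show (((m+1) :: ((List.range' 2 (m - 1)).reverse ++ [0, 1])).take k)
          = ((m+1) :: ((List.range' 2 (m - 1)).reverse ++ [0, 1])) from
        List.take_of_length_le (by simp [List.length_range']; omega)]
      have h0 : (0 : ℕ) ∈ ((m+1) :: ((List.range' 2 (m - 1)).reverse ++ [0, 1])) := by simp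
      rw [run_cons, fifoStep_hit h0, run_nil]
      have e1 : (List.range' 2 (m + 1 - 1)).reverse
          = (m + 1) :: (List.range' 2 (m - 1)).reverse := by
        rw [show m + 1 - 1 = m by omega, range'_concat1 2 m (by omega),
          show 2 + (m - 1) = m + 1 by omega, List.reverse_append]
        simp
      rw [e1]
      rfl

/-- FIFO on all of `P`. -/
lemma fifo_P (k : ℕ) (hk : 3 ≤ k) :
    run (fifoStep k) [] (starP16 k) = (Dcache k, k) := by
  show run (fifoStep k) []
      ((List.range' 1 (k - 1) ++ (List.range' 1 (k - 2)).reverse).flatMap pair) = _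
  rw [List.flatMap_append]
  have h1 := fifo_P1 k hk (k - 1) (by omega) le_rfl
  rw [show k - 1 - 1 = k - 2 by omega] at h1
  have h2 : run (fifoStep k) ((List.range' 2 (k - 2)).reverse ++ [0, 1])
      (((List.range' 1 (k - 2)).reverse).flatMap pair)
      = ((List.range' 2 (k - 2)).reverse ++ [0, 1], 0) := by
    refine fifo_hits ?_
    intro p hp
    rcases mem_flatMap_pair hp with h | h
    · subst h; simp
    · simp only [List.mem_reverse, List.mem_range'_1] at h
      simp only [List.mem_append, List.mem_reverse, List.mem_range'_1, List.mem_cons,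
        List.not_mem_nil, or_false]
      omega
  have h := run_append_eq h1 h2
  rw [h, show k - 1 + 1 + 0 = k by omega]
  rfl

lemma flatMap_pair_eq (l : List ℕ) : l.flatMap (fun i => [i, 0]) = l.flatMap pair := rfl

/-- FIFO on the first copy of `B` in a `J`. -/
lemma fifo_B_first (k : ℕ) (hk : 3 ≤ k) :
    run (fifoStep k) (Dcache k) (starB16 k) = (Ecache k 2, 3) := by
  have eB : ((List.range' 1 k).reverse).flatMap (fun i => [i, 0])
      = [k, 0] ++ ((((List.range' 2 (k - 2)).reverse).flatMap pair) ++ [1, 0]) := by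
    rw [flatMap_pair_eq]
    rw [range'_cons 1 k (by omega), range'_concat1 2 (k - 1) (by omega),
      show k - 1 - 1 = k - 2 by omega, show 2 + (k - 2) = k by omega,
      List.reverse_cons, List.reverse_append]
    simp [pair]
  show run (fifoStep k) (Dcache k) (((List.range' 1 k).reverse).flatMap (fun i => [i, 0])) = _
  rw [eB]
  have hk0 : run (fifoStep k) (Dcache k) [k, 0]
      = (k :: ((List.range' 2 (k - 2)).reverse ++ [0]), 1) := by
    have hmiss : (k : ℕ) ∉ Dcache k := by
      simp only [Dcache, List.mem_append, List.mem_reverse, List.mem_range'_1, List.mem_cons,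
        List.not_mem_nil, or_false] <;> omega
    rw [run_cons, fifoStep_miss hmiss]
    have e1 : k :: Dcache k = (k :: ((List.range' 2 (k - 2)).reverse ++ [0])) ++ [1] := by
      simp [Dcache]
    rw [show ((k :: Dcache k).take k) = k :: ((List.range' 2 (k - 2)).reverse ++ [0]) from by
      rw [e1]; exact List.take_left' (by simp [List.length_range']; omega)]
    have h0 : (0 : ℕ) ∈ k :: ((List.range' 2 (k - 2)).reverse ++ [0]) := by simp
    rw [run_cons, fifoStep_hit h0, run_nil]
    rfl
  have hmid : run (fifoStep k) (k :: ((List.range' 2 (k - 2)).reverse ++ [0]))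
      ((((List.range' 2 (k - 2)).reverse).flatMap pair))
      = (k :: ((List.range' 2 (k - 2)).reverse ++ [0]), 0) := by
    refine fifo_hits ?_
    intro p hp
    rcases mem_flatMap_pair hp with h | h
    · subst h; simp
    · simp [h]
  have h10 : run (fifoStep k) (k :: ((List.range' 2 (k - 2)).reverse ++ [0])) [1, 0]
      = (Ecache k 2, 2) := by
    have hmiss1 : (1 : ℕ) ∉ k :: ((List.range' 2 (k - 2)).reverse ++ [0]) := by
      simp only [List.mem_cons, List.mem_append, List.mem_reverse, List.mem_range'_1,
        List.not_mem_nil, or_false] <;> omega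
    rw [run_cons, fifoStep_miss hmiss1]
    have e2 : (1 :: k :: ((List.range' 2 (k - 2)).reverse ++ [0]))
        = (1 :: k :: (List.range' 2 (k - 2)).reverse) ++ [0] := by simp
    rw [show ((1 :: k :: ((List.range' 2 (k - 2)).reverse ++ [0])).take k)
        = 1 :: k :: (List.range' 2 (k - 2)).reverse from by
      rw [e2]; exact List.take_left' (by simp [List.length_range']; omega)]
    have hmiss0 : (0 : ℕ) ∉ 1 :: k :: (List.range' 2 (k - 2)).reverse := by
      simp only [List.mem_cons, List.mem_reverse, List.mem_range'_1] <;> omega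
    rw [run_cons, fifoStep_miss hmiss0]
    have e3 : (0 :: 1 :: k :: (List.range' 2 (k - 2)).reverse)
        = (0 :: 1 :: k :: (List.range' 3 (k - 3)).reverse) ++ [2] := by
      rw [range'_cons 2 (k - 2) (by omega), show k - 2 - 1 = k - 3 by omega,
        List.reverse_cons]
      simp
    rw [show ((0 :: 1 :: k :: (List.range' 2 (k - 2)).reverse).take k)
        = 0 :: 1 :: k :: (List.range' 3 (k - 3)).reverse from by
      rw [e3]; exact List.take_left' (by simp [List.length_range']; omega)]
    rw [run_nil]
    simp only [Ecache, Prod.mk.injEq]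
    constructor
    · rw [show (2 : ℕ) - 2 = 0 from rfl, show k - 1 - 2 = k - 3 by omega]
      simp [show (2:ℕ) + 1 = 3 from rfl]
    · rfl
  have htot := run_append_eq hk0 (run_append_eq hmid h10)
  rw [htot]

end Star16

namespace Star16

lemma eB_split (k c : ℕ) (hc : 2 ≤ c) (hck : c ≤ k - 1) (hk : 3 ≤ k) :
    ((List.range' 1 k).reverse).flatMap pair
      = ((List.range' (c + 1) (k - c)).reverse).flatMap pair
        ++ ([c, 0] ++ ((List.range' 1 (c - 1)).reverse).flatMap pair) := by
  rw [range'_split 1 k (c - 1) (by omega), show 1 + (c - 1) = c by omega,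
    range'_cons c (k - (c - 1)) (by omega), show k - (c - 1) - 1 = k - c by omega,
    List.reverse_append, List.reverse_cons, List.flatMap_append, List.flatMap_append]
  simp [pair]

/-- FIFO on a middle copy of `B` inside a `J` (`2 ≤ c ≤ k-2`): one fault. -/
lemma fifo_B_mid (k : ℕ) (hk : 3 ≤ k) (c : ℕ) (hc : 2 ≤ c) (hck : c ≤ k - 2) :
    run (fifoStep k) (Ecache k c) (starB16 k) = (Ecache k (c + 1), 1) := by
  show run (fifoStep k) (Ecache k c) (((List.range' 1 k).reverse).flatMap (fun i => [i, 0])) = _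
  rw [flatMap_pair_eq, eB_split k c hc (by omega) hk]
  have hhits1 : run (fifoStep k) (Ecache k c) (((List.range' (c + 1) (k - c)).reverse).flatMap pair)
      = (Ecache k c, 0) := by
    refine fifo_hits ?_
    intro p hp
    rcases mem_flatMap_pair hp with h | h
    · subst h; simp [Ecache]
    · simp only [List.mem_reverse, List.mem_range'_1] at h
      simp only [Ecache, List.mem_append, List.mem_reverse, List.mem_range'_1, List.mem_cons,
        List.not_mem_nil, or_false]
      omega
  have hc0 : run (fifoStep k) (Ecache k c) [c, 0] = (Ecache k (c + 1), 1) := by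
    have hmiss : (c : ℕ) ∉ Ecache k c := by
      simp only [Ecache, List.mem_append, List.mem_reverse, List.mem_range'_1, List.mem_cons,
        List.not_mem_nil, or_false] <;> omega
    rw [run_cons, fifoStep_miss hmiss]
    have e1 : c :: Ecache k c = Ecache k (c + 1) ++ [c + 1] := by
      simp only [Ecache]
      rw [range'_cons (c + 1) (k - 1 - c) (by omega),
        show k - 1 - c - 1 = k - 1 - (c + 1) by omega, List.reverse_cons,
        show c + 1 - 2 = c - 1 by omega, range'_concat1 2 (c - 1) (by omega),
        show c - 1 - 1 = c - 2 by omega, show 2 + (c - 2) = c by omega, List.reverse_append]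
      simp
    rw [show ((c :: Ecache k c).take k) = Ecache k (c + 1) from by
      rw [e1]; exact List.take_left' (by simp [Ecache, List.length_range']; omega)]
    have h0 : (0 : ℕ) ∈ Ecache k (c + 1) := by simp [Ecache]
    rw [run_cons, fifoStep_hit h0, run_nil]
    rfl
  have hhits2 : run (fifoStep k) (Ecache k (c + 1))
      (((List.range' 1 (c - 1)).reverse).flatMap pair) = (Ecache k (c + 1), 0) := by
    refine fifo_hits ?_
    intro p hp
    rcases mem_flatMap_pair hp with h | h
    · subst h; simp [Ecache]
    · simp only [List.mem_reverse, List.mem_range'_1] at h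
      simp only [Ecache, List.mem_append, List.mem_reverse, List.mem_range'_1, List.mem_cons,
        List.not_mem_nil, or_false]
      omega
  rw [run_append_eq hhits1 (run_append_eq hc0 hhits2)]

/-- FIFO on the last copy of `B` inside a `J`: one fault, back to `Dcache`. -/
lemma fifo_B_last (k : ℕ) (hk : 3 ≤ k) :
    run (fifoStep k) (Ecache k (k - 1)) (starB16 k) = (Dcache k, 1) := by
  have eE : Ecache k (k - 1) = ((List.range' 2 (k - 3)).reverse ++ [0, 1]) ++ [k] := by
    simp only [Ecache]
    rw [show k - 1 - (k - 1) = 0 by omega, show k - 1 - 2 = k - 3 by omega, List.range'_zero]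
    simp
  show run (fifoStep k) (Ecache k (k - 1))
      (((List.range' 1 k).reverse).flatMap (fun i => [i, 0])) = _
  rw [flatMap_pair_eq, eB_split k (k - 1) (by omega) le_rfl hk]
  have hhits1 : run (fifoStep k) (Ecache k (k - 1))
      (((List.range' (k - 1 + 1) (k - (k - 1))).reverse).flatMap pair)
      = (Ecache k (k - 1), 0) := by
    refine fifo_hits ?_
    intro p hp
    rcases mem_flatMap_pair hp with h | h
    · subst h; simp [Ecache]
    · simp only [List.mem_reverse, List.mem_range'_1] at h
      simp only [Ecache, List.mem_append, List.mem_reverse, List.mem_range'_1, List.mem_cons,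
        List.not_mem_nil, or_false]
      omega
  have hc0 : run (fifoStep k) (Ecache k (k - 1)) [k - 1, 0] = (Dcache k, 1) := by
    have hmiss : (k - 1 : ℕ) ∉ Ecache k (k - 1) := by
      simp only [Ecache, List.mem_append, List.mem_reverse, List.mem_range'_1, List.mem_cons,
        List.not_mem_nil, or_false] <;> omega
    rw [run_cons, fifoStep_miss hmiss]
    have e1 : (k - 1) :: Ecache k (k - 1) = Dcache k ++ [k] := by
      rw [eE]
      simp only [Dcache]
      rw [range'_concat1 2 (k - 2) (by omega), show k - 2 - 1 = k - 3 by omega,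
        show 2 + (k - 3) = k - 1 by omega, List.reverse_append]
      simp
    rw [show (((k - 1) :: Ecache k (k - 1)).take k) = Dcache k from by
      rw [e1]; exact List.take_left' (by simp [Dcache, List.length_range']; omega)]
    have h0 : (0 : ℕ) ∈ Dcache k := by simp [Dcache]
    rw [run_cons, fifoStep_hit h0, run_nil]
    rfl
  have hhits2 : run (fifoStep k) (Dcache k)
      (((List.range' 1 (k - 1 - 1)).reverse).flatMap pair) = (Dcache k, 0) := by
    refine fifo_hits ?_
    intro p hp
    rcases mem_flatMap_pair hp with h | h
    · subst h; simp [Dcache]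
    · simp only [List.mem_reverse, List.mem_range'_1] at h
      simp only [Dcache, List.mem_append, List.mem_reverse, List.mem_range'_1, List.mem_cons,
        List.not_mem_nil, or_false]
      omega
  rw [run_append_eq hhits1 (run_append_eq hc0 hhits2)]

/-- Chaining the middle copies of `B`. -/
lemma fifo_chain (k : ℕ) (hk : 3 ≤ k) : ∀ t c, 2 ≤ c → c + t ≤ k - 1 →
    run (fifoStep k) (Ecache k c) (repeatList (starB16 k) t) = (Ecache k (c + t), t) := by
  intro t
  induction t with
  | zero =>
    intro c hc hck
    rw [repeatList_zero, run_nil, Nat.add_zero]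
  | succ t ih =>
    intro c hc hck
    rw [repeatList_succ]
    have h := run_append_eq (fifo_B_mid k hk c hc (by omega)) (ih (c + 1) (by omega) (by omega))
    rw [h]
    simp only [Prod.mk.injEq]
    constructor
    · rw [show c + (t + 1) = c + 1 + t by omega]
    · omega

/-- FIFO over one whole `J = B^{k-1}`. -/
lemma fifo_J (k : ℕ) (hk : 3 ≤ k) :
    run (fifoStep k) (Dcache k) (repeatList (starB16 k) (k - 1)) = (Dcache k, k + 1) := by
  rw [show k - 1 = 1 + ((k - 3) + 1) by omega, repeatList_add, repeatList_add, repeatList_one]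
  have hchain := fifo_chain k hk (k - 3) 2 le_rfl (by omega)
  rw [show 2 + (k - 3) = k - 1 by omega] at hchain
  have h := run_append_eq (fifo_B_first k hk) (run_append_eq hchain (fifo_B_last k hk))
  rw [h]
  simp only [Prod.mk.injEq, true_and]
  omega

/-- FIFO on the whole sequence `I_n`. -/
lemma fifo_run (k : ℕ) (hk : 3 ≤ k) (n : ℕ) :
    run (fifoStep k) [] (starSeq16 k n) = (Dcache k, k + n * (k + 1)) := by
  show run (fifoStep k) [] (starP16 k ++ repeatList (repeatList (starB16 k) (k - 1)) n) = _
  exact run_append_eq (fifo_P k hk) (run_repeat (fifo_J k hk) n)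

end Star16

namespace Star16

lemma length_flatMap_pair (l : List ℕ) : (l.flatMap pair).length = 2 * l.length := by
  induction l with
  | nil => simp
  | cons a t ih => simp [pair] at ih ⊢; omega

lemma length_repeatList (l : List ℕ) (n : ℕ) : (repeatList l n).length = n * l.length := by
  induction n with
  | zero => simp [repeatList_zero]
  | succ n ih => rw [repeatList_succ]; simp [List.length_append, ih]; ring

lemma length_starSeq (k n : ℕ) (hk : 3 ≤ k) :
    (starSeq16 k n).length = (4 * k - 6) + n * ((k - 1) * (2 * k)) := by
  show (starP16 k ++ repeatList (repeatList (starB16 k) (k - 1)) n).length = _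
  rw [List.length_append, length_repeatList, length_repeatList]
  have hP : (starP16 k).length = 4 * k - 6 := by
    show ((List.range' 1 (k - 1) ++ (List.range' 1 (k - 2)).reverse).flatMap
      (fun i => [i, 0])).length = _
    rw [flatMap_pair_eq, length_flatMap_pair]
    simp [List.length_append, List.length_range']
    omega
  have hB : (starB16 k).length = 2 * k := by
    show (((List.range' 1 k).reverse).flatMap (fun i => [i, 0])).length = _
    rw [flatMap_pair_eq, length_flatMap_pair]
    simp [List.length_range']
  rw [hP, hB]

end Star16

open Filter in
/-- On the star graph, for `I_n = ⟨P, J^n⟩` as above,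
`LRU(I_n) = k + (k−1)kn` and `FIFO(I_n) = k + (k+1)n`, so
`(FIFO(I_n) − LRU(I_n))/|I_n| → −1/2 + (k+1)/(2k(k−1))`. -/
theorem stmt16 (k N : ℕ) (hk : 3 ≤ k) (hN : k + 1 ≤ N) :
    (∀ n, lruCost k (starSeq16 k n) = k + (k - 1) * k * n ∧
      fifoCost k (starSeq16 k n) = k + (k + 1) * n) ∧
    Tendsto
      (fun n : ℕ =>
        ((fifoCost k (starSeq16 k n) : ℝ) - (lruCost k (starSeq16 k n) : ℝ)) /
          ((starSeq16 k n).length : ℝ))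
      atTop (nhds (-(1 / 2) + ((k : ℝ) + 1) / (2 * k * (k - 1)))) := by
  have hlru : ∀ n, lruCost k (starSeq16 k n) = k + (k - 1) * k * n := by
    intro n
    show (Star16.run (lruStep k) [] (starSeq16 k n)).2 = _
    rw [Star16.lru_run k hk n]
    ring
  have hfifo : ∀ n, fifoCost k (starSeq16 k n) = k + (k + 1) * n := by
    intro n
    show (Star16.run (fifoStep k) [] (starSeq16 k n)).2 = _
    rw [Star16.fifo_run k hk n]
    ring
  refine ⟨fun n => ⟨hlru n, hfifo n⟩, ?_⟩
  have hk3 : (3 : ℝ) ≤ (k : ℝ) := by exact_mod_cast hk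
  have hk0 : (k : ℝ) ≠ 0 := by linarith
  have hk1 : (k : ℝ) - 1 ≠ 0 := by intro h; nlinarith
  have hD : (0 : ℝ) < 2 * (k : ℝ) * ((k : ℝ) - 1) := by nlinarith
  have hC : (0 : ℝ) < 4 * (k : ℝ) - 6 := by linarith
  set A : ℝ := ((k : ℝ) + 1) - (k : ℝ) * ((k : ℝ) - 1) with hA_def
  have key : ∀ n : ℕ,
      ((fifoCost k (starSeq16 k n) : ℝ) - (lruCost k (starSeq16 k n) : ℝ)) /
          ((starSeq16 k n).length : ℝ)
        = A / (2 * (k : ℝ) * ((k : ℝ) - 1))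
          - (A * (4 * (k : ℝ) - 6) / (2 * (k : ℝ) * ((k : ℝ) - 1)))
              / ((4 * (k : ℝ) - 6) + 2 * (k : ℝ) * ((k : ℝ) - 1) * n) := by
    intro n
    have hden : (0 : ℝ) < (4 * (k : ℝ) - 6) + 2 * (k : ℝ) * ((k : ℝ) - 1) * n := by
      have h1 : (0 : ℝ) ≤ 2 * (k : ℝ) * ((k : ℝ) - 1) * n :=
        mul_nonneg hD.le (Nat.cast_nonneg n)
      linarith
    have hlen : ((starSeq16 k n).length : ℝ)
        = (4 * (k : ℝ) - 6) + 2 * (k : ℝ) * ((k : ℝ) - 1) * n := by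
      rw [Star16.length_starSeq k n hk]
      push_cast [Nat.cast_sub (show 6 ≤ 4 * k by omega), Nat.cast_sub (show 1 ≤ k by omega)]
      ring
    rw [hlru n, hfifo n, hlen]
    push_cast [Nat.cast_sub (show 1 ≤ k by omega)]
    rw [hA_def]
    rw [div_eq_iff hden.ne', sub_mul _ _ (4 * (k : ℝ) - 6 + 2 * (k : ℝ) * ((k : ℝ) - 1) * n), div_mul_cancel₀ _ hden.ne', div_mul_eq_mul_div,
      div_sub_div_same, eq_div_iff hD.ne']
    ring
  have h1 : Tendsto (fun n : ℕ => (4 * (k : ℝ) - 6) + 2 * (k : ℝ) * ((k : ℝ) - 1) * n)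
      atTop atTop :=
    tendsto_atTop_add_const_left _ _ (Filter.Tendsto.const_mul_atTop hD
      tendsto_natCast_atTop_atTop)
  have h2 : Tendsto (fun n : ℕ => (A * (4 * (k : ℝ) - 6) / (2 * (k : ℝ) * ((k : ℝ) - 1)))
      / ((4 * (k : ℝ) - 6) + 2 * (k : ℝ) * ((k : ℝ) - 1) * n)) atTop (nhds 0) :=
    Filter.Tendsto.div_atTop tendsto_const_nhds h1
  have h3 := (tendsto_const_nhds
    (x := A / (2 * (k : ℝ) * ((k : ℝ) - 1))) (f := atTop (α := ℕ))).sub h2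
  have hval : -(1 / 2 : ℝ) + ((k : ℝ) + 1) / (2 * (k : ℝ) * ((k : ℝ) - 1))
      = A / (2 * (k : ℝ) * ((k : ℝ) - 1)) - 0 := by
    rw [hA_def]
    field_simp
    ring
  rw [hval]
  exact Filter.Tendsto.congr (fun n => (key n).symm) h3
end

section
/- With x = ⌊log₂(N/r)⌋ and X_r = r(x−1) + ⌈N/2^x⌉, one has r·x + (⌈N/2^x⌉ − r) = X_r and 1 ≤ X_r ≤ k, where N = k + r and 1 ≤ r ≤ k − 1. -/
/-- Ceiling division of naturals: `⌈a / b⌉`. -/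
def ceilDivNat (a b : ℕ) : ℕ := (a + b - 1) / b

lemma two_mul_le_two_pow (x : ℕ) : 2 * x ≤ 2 ^ x := by
  induction x with
  | zero => simp
  | succ n ih =>
    rcases Nat.eq_zero_or_pos n with h | h
    · subst h; norm_num
    · have h2 : 2 ≤ 2 ^ n := by
        calc 2 = 2 ^ 1 := rfl
        _ ≤ 2 ^ n := Nat.pow_le_pow_right (by norm_num) h
      calc 2 * (n + 1) = 2 * n + 2 := by ring
      _ ≤ 2 ^ n + 2 ^ n := Nat.add_le_add ih h2
      _ = 2 ^ (n + 1) := by ring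

/-- With `N = k + r`, `1 ≤ r ≤ k − 1`, `x = ⌊log₂ (N/r)⌋` and
`X_r = r(x−1) + ⌈N/2^x⌉`, one has `r·x + (⌈N/2^x⌉ − r) = X_r` and `1 ≤ X_r ≤ k`. -/
theorem stmt19 (k r N : ℕ) (hk : 2 ≤ k) (hr1 : 1 ≤ r) (hr2 : r ≤ k - 1)
    (hN : N = k + r) :
    r * Nat.log 2 (N / r) + (ceilDivNat N (2 ^ (Nat.log 2 (N / r))) - r) =
        r * (Nat.log 2 (N / r) - 1) + ceilDivNat N (2 ^ (Nat.log 2 (N / r))) ∧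
      1 ≤ r * (Nat.log 2 (N / r) - 1) + ceilDivNat N (2 ^ (Nat.log 2 (N / r))) ∧
      r * (Nat.log 2 (N / r) - 1) + ceilDivNat N (2 ^ (Nat.log 2 (N / r))) ≤ k := by
  have hr0 : 0 < r := hr1
  have hNge : 2 * r + 1 ≤ N := by omega
  set x := Nat.log 2 (N / r) with hxdef
  -- x ≥ 1
  have hdiv2 : 2 ≤ N / r := (Nat.le_div_iff_mul_le hr0).mpr (by omega)
  have hx1 : 1 ≤ x := by
    have := (Nat.le_log_iff_pow_le (b := 2) (x := 1) (by norm_num)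
      (by omega : N / r ≠ 0)).mpr (by simpa using hdiv2)
    simpa [hxdef] using this
  set m := 2 ^ x with hmdef
  have hm0 : 0 < m := Nat.pow_pos (by norm_num)
  have hm2 : 2 ≤ m := by
    calc 2 = 2 ^ 1 := rfl
    _ ≤ 2 ^ x := Nat.pow_le_pow_right (by norm_num) hx1
  -- r * 2^x ≤ N
  have hlog : m ≤ N / r := Nat.pow_log_le_self 2 (by omega : N / r ≠ 0)
  have hlow : m * r ≤ N := by
    have := (Nat.le_div_iff_mul_le hr0).mp hlog
    linarith
  set c := ceilDivNat N m with hcdef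
  have hceq : c = (N + m - 1) / m := rfl
  -- c ≥ r
  have hcr : r ≤ c := by
    rw [hceq]
    apply (Nat.le_div_iff_mul_le hm0).mpr
    calc r * m = m * r := Nat.mul_comm r m
    _ ≤ N := hlow
    _ ≤ N + m - 1 := by omega
  -- 2 * (r * x) ≤ N
  have hN2rx : 2 * (r * x) ≤ N := by
    calc 2 * (r * x) = r * (2 * x) := by ring
    _ ≤ r * 2 ^ x := Nat.mul_le_mul_left r (two_mul_le_two_pow x)
    _ = m * r := by rw [Nat.mul_comm]
    _ ≤ N := hlow
  -- c ≤ N - r * x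
  have hcub : r * x + c ≤ N := by
    have ht : N ≤ (N - r * x) * m := by
      have h2 : (N - r * x) * 2 ≤ (N - r * x) * m := Nat.mul_le_mul_left _ hm2
      omega
    have hlt : c < (N - r * x) + 1 := by
      rw [hceq]
      apply (Nat.div_lt_iff_lt_mul hm0).mpr
      have : (N - r * x + 1) * m = (N - r * x) * m + m := by ring
      omega
    omega
  obtain ⟨y, hy⟩ : ∃ y, x = y + 1 := ⟨x - 1, by omega⟩
  rw [hy] at hcub ⊢
  simp only [Nat.add_sub_cancel, Nat.mul_add, Nat.mul_one]
  have hjy : r * (y + 1) = r * y + r := by ring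
  omega
end
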